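/- arXiv:2510.10310 — 12 statements merged into one kernel-verified Lean document; each statement's English description precedes it below -/
import Mathlib

section
/- Let c be a nonzero integer, d ≥ 3 an integer, p a prime dividing d, and ε ∈ {1, −1}. If α, y are integers with α^d + c = ε·y^p, then |α| ≤ √|c|. -/
private lemma pow_gap_int (M N : ℤ) (p : ℕ) (hp : 1 ≤ p) (hN : 0 ≤ N) (h : N < M) :
    M ^ (p - 1) + N ^ p ≤ M ^ p := by
  have hM : 0 ≤ M := le_trans hN h.le
  have h1 : N ^ p ≤ N * M ^ (p - 1) := by
    calc N ^ p = N * N ^ (p - 1) := by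
          rw [← pow_succ']; congr 1; omega
      _ ≤ N * M ^ (p - 1) := by
          exact mul_le_mul_of_nonneg_left (pow_le_pow_left₀ hN h.le _) hN
  calc M ^ (p - 1) + N ^ p ≤ M ^ (p - 1) + N * M ^ (p - 1) := by linarith
    _ = (N + 1) * M ^ (p - 1) := by ring
    _ ≤ M * M ^ (p - 1) := by
        exact mul_le_mul_of_nonneg_right (by omega) (pow_nonneg hM _)
    _ = M ^ p := by rw [← pow_succ']; congr 1; omega

private lemma gap (u v b : ℤ) (p : ℕ) (hp : 2 ≤ p) (hb : 0 ≤ b)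
    (hu : |u| = b ^ p) (h : u ≠ v ^ p) : |v| ^ (p - 1) ≤ |u - v ^ p| := by
  set N := |v| with hNdef
  have hN : 0 ≤ N := abs_nonneg v
  have hvp : |v ^ p| = N ^ p := by rw [abs_pow]
  rcases lt_trichotomy b N with hlt | heq | hgt
  · -- b < N : |u - v^p| ≥ N^p − b^p ≥ N^(p-1)
    have h1 : |v ^ p| - |u| ≤ |u - v ^ p| := by
      have := abs_sub_abs_le_abs_sub (v ^ p) u
      rw [abs_sub_comm] at this
      linarith
    have h2 : N ^ (p - 1) + b ^ p ≤ N ^ p := pow_gap_int N b p (by omega) hb hlt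
    rw [hu, hvp] at h1
    linarith
  · -- |u| = |v^p|, so u = -v^p, |u - v^p| = 2 N^p
    have : u = v ^ p ∨ u = -(v ^ p) := by
      rw [abs_eq_abs.symm, hu, heq, ← hvp]
    rcases this with h1 | h1
    · exact absurd h1 h
    · rw [h1]
      have : |-(v ^ p) - v ^ p| = 2 * N ^ p := by
        rw [show -(v ^ p) - v ^ p = -(2 * v ^ p) by ring, abs_neg, abs_mul, hvp]
        norm_num
      rw [this]
      rcases eq_or_lt_of_le hN with hN0 | hN1
      · rw [← hN0, zero_pow (by omega : p - 1 ≠ 0)]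
        positivity
      · have hN1 : 1 ≤ N := hN1
        calc N ^ (p - 1) ≤ N ^ p := pow_le_pow_right₀ hN1 (by omega)
          _ ≤ 2 * N ^ p := by nlinarith [pow_nonneg hN p]
  · -- N < b : |u - v^p| ≥ b^p - N^p ≥ b^(p-1) ≥ N^(p-1)
    have h1 : |u| - |v ^ p| ≤ |u - v ^ p| := abs_sub_abs_le_abs_sub u (v ^ p)
    have h2 : b ^ (p - 1) + N ^ p ≤ b ^ p := pow_gap_int b N p (by omega) hN hgt
    have h3 : N ^ (p - 1) ≤ b ^ (p - 1) := pow_le_pow_left₀ hN hgt.le _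
    rw [hu, hvp] at h1
    linarith

theorem stmt1 (c α y ε : ℤ) (d p : ℕ) (hc : c ≠ 0) (hd : 3 ≤ d)
    (hp : p.Prime) (hpd : p ∣ d) (hε : ε = 1 ∨ ε = -1)
    (h : α ^ d + c = ε * y ^ p) :
    (|α| : ℝ) ≤ Real.sqrt |(c : ℝ)| := by
  obtain ⟨k, hk⟩ := hpd
  have hp2 : 2 ≤ p := hp.two_le
  have hk1 : 1 ≤ k := by
    rcases Nat.eq_zero_or_pos k with h0 | h0
    · subst h0; simp at hk; omega
    · exact h0
  -- key integer inequality: α^2 ≤ |c|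
  have key : α ^ 2 ≤ |c| := by
    have hαd : α ^ d = (α ^ k) ^ p := by
      rw [← pow_mul, hk, Nat.mul_comm]
    have hcne : ε * y ^ p ≠ (α ^ k) ^ p := by
      intro heq
      apply hc
      have := h
      rw [hαd, heq] at this
      linarith
    have hu : |ε * y ^ p| = |y| ^ p := by
      rcases hε with rfl | rfl <;> simp [abs_mul, abs_pow]
    have hg : |α ^ k| ^ (p - 1) ≤ |ε * y ^ p - (α ^ k) ^ p| :=
      gap (ε * y ^ p) (α ^ k) |y| p hp2 (abs_nonneg y) hu hcne
    have hceq : c = ε * y ^ p - (α ^ k) ^ p := by rw [← hαd]; linarith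
    rw [← hceq] at hg
    rw [abs_pow, ← pow_mul] at hg
    rcases eq_or_ne α 0 with rfl | hα0
    · simpa using abs_nonneg c
    · have hα1 : 1 ≤ |α| := Int.one_le_abs hα0
      have hexp : 2 ≤ k * (p - 1) := by
        rcases eq_or_lt_of_le hp2 with hp2' | hp3
        · -- p = 2, so d = 2k ≥ 3 gives k ≥ 2
          have : p = 2 := hp2'.symm
          subst this
          omega
        · -- p ≥ 3, so p - 1 ≥ 2
          have : 2 ≤ p - 1 := by omega
          calc 2 ≤ 1 * 2 := by norm_num
            _ ≤ k * (p - 1) := Nat.mul_le_mul hk1 this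
      calc α ^ 2 ≤ |α| ^ 2 := by
            rw [← abs_pow]; exact le_abs_self _
        _ ≤ |α| ^ (k * (p - 1)) := pow_le_pow_right₀ hα1 hexp
        _ ≤ |c| := hg
  -- transfer to ℝ
  have keyR : (α : ℝ) ^ 2 ≤ |(c : ℝ)| := by exact_mod_cast key
  calc (|α| : ℝ) = |(α : ℝ)| := by push_cast [Int.cast_abs]; ring
    _ = Real.sqrt ((α : ℝ) ^ 2) := (Real.sqrt_sq_eq_abs _).symm
    _ ≤ Real.sqrt |(c : ℝ)| := Real.sqrt_le_sqrt keyR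
end

section
/- Let f(x) = x^d + c with c a real number, d ≥ 3 an integer, |c| ≥ 2, and set ρ = |c|^{1/d}. If β is a real number with ||β| − ρ| ≥ 1, then |f^n(β)| > ρ^{d−1} > √|c| for all n ≥ 1, where f^n denotes the n-th iterate of f. -/
theorem stmt3 (c : ℝ) (d : ℕ) (hd : 3 ≤ d) (hc : 2 ≤ |c|)
    (β : ℝ) (hβ : 1 ≤ |(|β| - |c| ^ ((1 : ℝ) / d))|) :
    ∀ n : ℕ, 1 ≤ n →
      |(fun x : ℝ => x ^ d + c)^[n] β| > (|c| ^ ((1 : ℝ) / d)) ^ (d - 1) ∧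
      (|c| ^ ((1 : ℝ) / d)) ^ (d - 1) > Real.sqrt |c| := by
  have hA1 : (1:ℝ) < |c| := by linarith
  have hA0 : (0:ℝ) ≤ |c| := abs_nonneg c
  have hdR : (3:ℝ) ≤ (d:ℝ) := by exact_mod_cast hd
  have hd0 : (d:ℝ) ≠ 0 := by positivity
  set A := |c| with hAdef
  set ρ := A ^ ((1:ℝ)/d) with hρdef
  have hρ1 : 1 < ρ := by
    apply Real.one_lt_rpow_iff_of_pos (by linarith) |>.mpr
    exact Or.inl ⟨hA1, by positivity⟩
  have hρ0 : (0:ℝ) < ρ := by linarith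
  have hρd : ρ ^ d = A := by
    rw [hρdef, ← Real.rpow_natCast (A ^ ((1:ℝ)/d)) d, ← Real.rpow_mul hA0,
      one_div_mul_cancel hd0, Real.rpow_one]
  set K := ρ ^ (d - 1) with hKdef
  have hd1 : d - 1 + 1 = d := by omega
  have hKρ : K * ρ = A := by
    rw [hKdef, ← pow_succ, hd1, hρd]
  have hK1 : 1 < K := by
    apply one_lt_pow₀ hρ1 (by omega)
  have hK0 : (0:ℝ) < K := by linarith
  have hKA : K < A := by nlinarith
  -- sqrt part
  have hsqrt : K > Real.sqrt A := by
    have hKrpow : K = A ^ (((d:ℝ)-1)/(d:ℝ)) := by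
      rw [hKdef, hρdef, ← Real.rpow_natCast (A ^ ((1:ℝ)/d)) (d-1),
        ← Real.rpow_mul hA0]
      congr 1
      rw [Nat.cast_sub (by omega : 1 ≤ d)]
      field_simp
      norm_num
    rw [hKrpow, Real.sqrt_eq_rpow]
    apply Real.rpow_lt_rpow_left_iff hA1 |>.mpr
    rw [div_lt_div_iff₀ (by norm_num) (by linarith)]
    linarith
  -- abs helpers
  have habs1 : ∀ x : ℝ, |x| ^ d - A ≤ |x ^ d + c| := by
    intro x
    have h := abs_sub_abs_le_abs_sub (x ^ d) (-c)
    simpa [sub_neg_eq_add, abs_pow] using h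
  have habs2 : ∀ x : ℝ, A - |x| ^ d ≤ |x ^ d + c| := by
    intro x
    have h := abs_sub_abs_le_abs_sub c (-(x ^ d))
    simpa [sub_neg_eq_add, abs_pow, add_comm] using h
  -- step lemma
  have hstep : ∀ x : ℝ, K < |x| → K < |x ^ d + c| := by
    intro x hx
    have h1 : K ^ d < |x| ^ d := pow_lt_pow_left₀ hx (le_of_lt hK0) (by omega)
    have hKd : K ^ d = A ^ (d - 1) := by
      rw [hKdef, ← pow_mul, mul_comm, pow_mul, hρd]
    have h2 : A ^ 2 ≤ A ^ (d - 1) := pow_le_pow_right₀ (le_of_lt hA1) (by omega)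
    have h3 := habs1 x
    nlinarith [sq_nonneg A]
  -- base lemma
  have hbase : K < |β ^ d + c| := by
    rcases le_abs.mp hβ with h | h
    · -- ρ + 1 ≤ |β|
      have hb : ρ + 1 ≤ |β| := by linarith
      have h1 : (ρ + 1) ^ d ≤ |β| ^ d := pow_le_pow_left₀ (by linarith) hb d
      have h2 : K < (ρ + 1) ^ (d - 1) :=
        pow_lt_pow_left₀ (by linarith) (le_of_lt hρ0) (by omega)
      have h3 : (ρ + 1) ^ d = (ρ + 1) ^ (d - 1) * (ρ + 1) := by
        rw [← pow_succ, hd1]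
      have h4 := habs1 β
      nlinarith
    · -- |β| ≤ ρ - 1
      have hb : |β| ≤ ρ - 1 := by linarith
      have h1 : |β| ^ d ≤ (ρ - 1) ^ d := pow_le_pow_left₀ (abs_nonneg β) hb d
      have h2 : (ρ - 1) ^ (d - 1) < K :=
        pow_lt_pow_left₀ (by linarith) (by linarith) (by omega)
      have h3 : (ρ - 1) ^ d = (ρ - 1) ^ (d - 1) * (ρ - 1) := by
        rw [← pow_succ, hd1]
      have h4 := habs2 β
      nlinarith
  intro n hn
  obtain ⟨m, rfl⟩ : ∃ m, n = m + 1 := ⟨n - 1, by omega⟩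
  refine ⟨?_, hsqrt⟩
  induction m with
  | zero => simpa using hbase
  | succ k ih =>
    rw [Function.iterate_succ_apply']
    exact hstep _ (ih (by omega))
end

section
/- Let f(x) = x^2 + c with c a real number, |c| ≥ 3, and set ρ = √|c|. If β is a real number with ||β| − ρ| ≥ 1, then |f^n(β)| > |c| for all n ≥ 2, where f^n denotes the n-th iterate of f. -/
theorem stmt4 (c : ℝ) (hc : 3 ≤ |c|) (β : ℝ)
    (hβ : 1 ≤ |(|β| - Real.sqrt |c|)|) :
    ∀ n : ℕ, 2 ≤ n → |(fun x : ℝ => x ^ 2 + c)^[n] β| > |c| := by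
  set ρ := Real.sqrt |c| with hρdef
  have hρnn : 0 ≤ ρ := Real.sqrt_nonneg _
  have hρ2 : ρ ^ 2 = |c| := Real.sq_sqrt (abs_nonneg c)
  have hρ3 : 3 ≤ ρ ^ 2 := by linarith
  -- lower bounds on |x^2 + c|
  have lb1 : ∀ x : ℝ, x ^ 2 - |c| ≤ |x ^ 2 + c| := by
    intro x
    have h := abs_sub_abs_le_abs_sub (x ^ 2) (-c)
    have hx2 : |x ^ 2| = x ^ 2 := abs_of_nonneg (sq_nonneg x)
    rw [abs_neg, sub_neg_eq_add, hx2] at h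
    linarith
  have lb2 : ∀ x : ℝ, |c| - x ^ 2 ≤ |x ^ 2 + c| := by
    intro x
    have h := abs_sub_abs_le_abs_sub (-c) (x ^ 2)
    have hx2 : |x ^ 2| = x ^ 2 := abs_of_nonneg (sq_nonneg x)
    have h2 : |-c - x ^ 2| = |x ^ 2 + c| := by rw [← abs_neg]; ring_nf
    rw [abs_neg, hx2, h2] at h
    linarith
  -- key step: invariant 2ρ-1 ≤ |x| is preserved, and output exceeds |c|
  have step : ∀ x : ℝ, 2 * ρ - 1 ≤ |x| →
      (2 * ρ - 1 ≤ |x ^ 2 + c| ∧ |c| < |x ^ 2 + c|) := by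
    intro x hx
    have hx0 : 0 ≤ 2 * ρ - 1 := by nlinarith [sq_nonneg ρ]
    have hxsq : (2 * ρ - 1) ^ 2 ≤ x ^ 2 := by
      have := sq_abs x
      nlinarith [mul_self_nonneg (|x| - (2 * ρ - 1))]
    have h1 := lb1 x
    constructor
    · nlinarith [sq_nonneg (ρ ^ 2 - 3), sq_nonneg ρ]
    · -- need x^2 - |c| > |c|, i.e. (2ρ-1)^2 - ρ^2 > ρ^2, i.e. 2ρ^2 - 4ρ + 1 > 0
      have key : 0 < 2 * ρ ^ 2 - 4 * ρ + 1 := by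
        nlinarith [mul_nonneg (sq_nonneg ρ) (by linarith : (0:ℝ) ≤ ρ ^ 2 - 3)]
      nlinarith
  -- base: |f β| ≥ 2ρ - 1
  have base : 2 * ρ - 1 ≤ |β ^ 2 + c| := by
    rcases abs_cases (|β| - ρ) with ⟨heq, _⟩ | ⟨heq, _⟩
    · -- |β| - ρ ≥ 1
      have h1 : ρ + 1 ≤ |β| := by rw [heq] at hβ; linarith
      have h2 : (ρ + 1) ^ 2 ≤ β ^ 2 := by
        have := sq_abs β
        nlinarith [mul_self_nonneg (|β| - (ρ + 1))]
      have := lb1 β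
      nlinarith
    · -- ρ - |β| ≥ 1
      have h1 : |β| ≤ ρ - 1 := by rw [heq] at hβ; linarith
      have h2 : β ^ 2 ≤ (ρ - 1) ^ 2 := by
        have := sq_abs β
        nlinarith [abs_nonneg β]
      have := lb2 β
      nlinarith
  -- invariant for all n ≥ 1
  have inv : ∀ n : ℕ, 1 ≤ n → 2 * ρ - 1 ≤ |(fun x : ℝ => x ^ 2 + c)^[n] β| := by
    intro n hn
    induction n with
    | zero => omega
    | succ m ih =>
      rcases Nat.eq_zero_or_pos m with rfl | hm
      · simpa using base
      · rw [Function.iterate_succ_apply']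
        exact (step _ (ih hm)).1
  intro n hn
  obtain ⟨m, rfl⟩ : ∃ m, n = m + 1 := ⟨n - 1, by omega⟩
  have hm : 1 ≤ m := by omega
  rw [Function.iterate_succ_apply']
  exact (step _ (inv m hm)).2
end

section
/- Let f(x) = x^d + c with c a nonzero integer and d ≥ 3 odd. If f^3(α) = ε·y^p for some integers α, y, some prime p | d, and some ε = ±1, then α = ε·y^p and ε·y^p is a fixed point of f. -/
-- gap between consecutive k-th powers
lemma pow_sub_pred (k : ℕ) (hk : 1 ≤ k) (a : ℤ) (ha : 1 ≤ a) :
    a ^ (k - 1) ≤ a ^ k - (a - 1) ^ k := by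
  have h1 : (a - 1) ^ k ≤ (a - 1) * a ^ (k - 1) := by
    have : (a - 1) ^ k = (a - 1) * (a - 1) ^ (k - 1) := by
      rw [← pow_succ']; congr 1; omega
    rw [this]
    exact mul_le_mul_of_nonneg_left (pow_le_pow_left₀ (by linarith) (by linarith) _) (by linarith)
  have h2 : a ^ k = a * a ^ (k - 1) := by rw [← pow_succ']; congr 1; omega
  nlinarith [h1, h2]

lemma gap_aux (k : ℕ) (hk : Odd k) (x y : ℤ) (h : y < x) :
    (max |x| |y|) ^ (k - 1) ≤ x ^ k - y ^ k := by
  have hk1 : 1 ≤ k := hk.pos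
  rcases le_or_gt |y| |x| with hxy | hxy
  · have hx1 : 1 ≤ x := by
      rcases abs_cases x with ⟨h1, h2⟩ | ⟨h1, h2⟩ <;> rcases abs_cases y with ⟨h3, h4⟩ | ⟨h3, h4⟩ <;> omega
    have hM : max |x| |y| = x := by rw [max_eq_left hxy, abs_of_pos (by linarith)]
    rw [hM]
    have hy : y ^ k ≤ (x - 1) ^ k := hk.strictMono_pow.monotone (by linarith)
    have := pow_sub_pred k hk1 x hx1
    linarith
  · have hy1 : y ≤ -1 := by
      rcases abs_cases x with ⟨h1, h2⟩ | ⟨h1, h2⟩ <;> rcases abs_cases y with ⟨h3, h4⟩ | ⟨h3, h4⟩ <;> omega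
    have hM : max |x| |y| = -y := by rw [max_eq_right (le_of_lt hxy), abs_of_neg (by linarith)]
    rw [hM]
    have hx : (y + 1) ^ k ≤ x ^ k := hk.strictMono_pow.monotone (by linarith)
    have hb : 1 ≤ -y := by linarith
    have := pow_sub_pred k hk1 (-y) hb
    have e1 : (-y) ^ k = -(y ^ k) := hk.neg_pow y
    have e2 : (-y - 1) ^ k = -((y + 1) ^ k) := by
      have := hk.neg_pow (y + 1); rw [← this]; ring_nf
    linarith

lemma gap_s7 (k : ℕ) (hk : Odd k) (x y : ℤ) (h : x ≠ y) :
    (max |x| |y|) ^ (k - 1) ≤ |x ^ k - y ^ k| := by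
  rcases lt_trichotomy y x with hlt | heq | hlt
  · exact le_trans (gap_aux k hk x y hlt) (le_abs_self _)
  · exact absurd heq.symm h
  · have := gap_aux k hk y x hlt
    rw [max_comm] at this
    calc (max |x| |y|) ^ (k-1) ≤ y ^ k - x ^ k := this
      _ ≤ |x ^ k - y ^ k| := by rw [abs_sub_comm]; exact le_abs_self _

lemma no_two_pow (p : ℕ) (hp3 : 3 ≤ p) (t : ℤ) (h : t ^ p = 2 ∨ t ^ p = -2) : False := by
  have h1 : |t| ^ p = 2 := by rcases h with h | h <;> rw [← abs_pow, h] <;> norm_num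
  rcases le_or_gt |t| 1 with ht | ht
  · have : |t| ^ p ≤ 1 := pow_le_one₀ (abs_nonneg t) ht
    linarith
  · have h2 : (2:ℤ) ≤ |t| := ht
    have h3 : (2:ℤ) ^ p ≤ |t| ^ p := pow_le_pow_left₀ (by norm_num) h2 p
    have h4 : (8:ℤ) ≤ 2 ^ p := by
      calc (8:ℤ) = 2 ^ 3 := by norm_num
        _ ≤ 2 ^ p := pow_le_pow_right₀ (by norm_num) hp3
    linarith

set_option maxHeartbeats 1000000 in
theorem stmt7 (c : ℤ) (d : ℕ) (hc : c ≠ 0) (hd : 3 ≤ d) (hodd : Odd d)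
    (α y ε : ℤ) (p : ℕ) (hp : p.Prime) (hpd : p ∣ d) (hε : ε = 1 ∨ ε = -1)
    (h : (fun x : ℤ => x ^ d + c)^[3] α = ε * y ^ p) :
    α = ε * y ^ p ∧ (ε * y ^ p) ^ d + c = ε * y ^ p := by
  have hoddm : d % 2 = 1 := Nat.odd_iff.mp hodd
  have hp2 : p ≠ 2 := by rintro rfl; omega
  have hp3 : 3 ≤ p := by have := hp.two_le; omega
  have hpodd : Odd p := hp.odd_of_ne_two hp2
  obtain ⟨m, hm0⟩ := hpd
  have hm : d = m * p := by rw [hm0, Nat.mul_comm]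
  have hm1 : 1 ≤ m := by
    rcases Nat.eq_zero_or_pos m with rfl | h1
    · omega
    · exact h1
  obtain ⟨w, hw⟩ : ∃ w : ℤ, w = α ^ d + c := ⟨_, rfl⟩
  obtain ⟨z, hz⟩ : ∃ z : ℤ, z = w ^ d + c := ⟨_, rfl⟩
  have h' : z ^ d + c = ε * y ^ p := by
    rw [hz, hw]
    simpa [Function.iterate_succ_apply'] using h
  have hA : (ε * y) ^ p = ε * y ^ p := by
    rcases hε with rfl | rfl
    · simp
    · simp [hpodd.neg_pow]
  have hB : (z ^ m) ^ p = z ^ d := by rw [← pow_mul, ← hm]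
  have hABc : (ε * y) ^ p - (z ^ m) ^ p = c := by rw [hA, hB]; linarith
  have hABne : ε * y ≠ z ^ m := by
    intro he; apply hc; rw [he] at hABc; simpa using hABc.symm
  have hgap1 := gap_s7 p hpodd (ε * y) (z ^ m) hABne
  rw [hABc] at hgap1
  have hBmax : |z ^ m| ^ (p - 1) ≤ (max |ε * y| |z ^ m|) ^ (p - 1) :=
    pow_le_pow_left₀ (abs_nonneg _) (le_max_right _ _) _
  have hdm : (d - m) = m * (p - 1) := by
    have h1 : m * (p - 1) = m * p - m := by
      obtain ⟨q, rfl⟩ : ∃ q, p = q + 1 := ⟨p - 1, by omega⟩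
      simp [Nat.mul_add]
    omega
  have hzc : |z| ^ (d - m) ≤ |c| := by
    calc |z| ^ (d - m) = (|z| ^ m) ^ (p - 1) := by rw [← pow_mul, hdm]
      _ = |z ^ m| ^ (p - 1) := by rw [abs_pow]
      _ ≤ (max |ε * y| |z ^ m|) ^ (p - 1) := hBmax
      _ ≤ |c| := hgap1
  have hdm2 : 2 ≤ d - m := by
    rw [hdm]
    calc 2 ≤ p - 1 := by omega
      _ ≤ m * (p - 1) := Nat.le_mul_of_pos_left _ (by omega)
  have hz2 : |z| ^ 2 ≤ |c| := by
    rcases le_or_gt |z| 1 with h1 | h1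
    · have h2 : |z| ^ 2 ≤ 1 := pow_le_one₀ (abs_nonneg _) h1
      have h3 := Int.one_le_abs hc
      linarith
    · calc |z| ^ 2 ≤ |z| ^ (d - m) := pow_le_pow_right₀ (by linarith) hdm2
        _ ≤ |c| := hzc
  by_cases hαw : α = w
  · rw [hαw] at hw
    have hzw : z = w := by rw [hz, ← hw]
    have hβz : z ^ d + c = z := by rw [hzw, ← hw]
    constructor
    · rw [← h', hβz, hzw]; exact hαw
    · rw [← h', hβz]; exact hβz
  · exfalso
    have hwz : α ^ d - w ^ d = w - z := by rw [hz, hw]; ring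
    have hgap2 := gap_s7 d hodd α w hαw
    rw [hwz] at hgap2
    obtain ⟨M, hM⟩ : ∃ M : ℤ, M = max |α| |w| := ⟨_, rfl⟩
    rw [← hM] at hgap2
    have hMα : |α| ≤ M := hM ▸ le_max_left _ _
    have hMw : |w| ≤ M := hM ▸ le_max_right _ _
    have hM0 : 0 ≤ M := le_trans (abs_nonneg _) hMα
    have hzlb : M ^ (d - 1) - M ≤ |z| := by
      have h1 : |w - z| ≤ |w| + |z| := abs_sub _ _
      linarith
    have hcub : |c| ≤ M ^ d + M := by
      have h1 : c = w - α ^ d := by rw [hw]; ring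
      have h2 : |c| ≤ |w| + |α ^ d| := by rw [h1]; exact abs_sub _ _
      have h3 : |α ^ d| ≤ M ^ d := by rw [abs_pow]; exact pow_le_pow_left₀ (abs_nonneg _) hMα _
      linarith
    rcases le_or_gt M 1 with hM1 | hM2
    · -- small case: α, w ∈ {-1,0,1}
      obtain ⟨ha1, ha2⟩ := abs_le.mp (le_trans hMα hM1)
      obtain ⟨hw1, hw2⟩ := abs_le.mp (le_trans hMw hM1)
      have hd0 : d ≠ 0 := by omega
      have hneg : (-1 : ℤ) ^ d = -1 := hodd.neg_one_pow
      have hαp : α ^ d = α := by interval_cases α <;> simp [hneg, zero_pow hd0]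
      have hwp : w ^ d = w := by interval_cases w <;> simp [hneg, zero_pow hd0]
      have hw' := hw; rw [hαp] at hw'
      have hcweq : c = w - α := by omega
      have hz' := hz; rw [hwp] at hz'
      have hzeq : z = 2 * w - α := by omega
      interval_cases α <;> interval_cases w
      · exact hαw rfl
      · -- α = -1, w = 0 : c = 1, z = 1, z^d + c = 2
        norm_num at hcweq hzeq
        subst hcweq; subst hzeq
        have h2 : ε * y ^ p = 2 := by rw [← h']; norm_num
        rcases hε with rfl | rfl
        · exact no_two_pow p hp3 y (Or.inl (by linarith))
        · exact no_two_pow p hp3 y (Or.inr (by linarith))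
      · norm_num at hcweq hzeq
        subst hcweq; subst hzeq
        norm_num at hz2
      · norm_num at hcweq hzeq
        subst hcweq; subst hzeq
        norm_num at hz2
      · exact hαw rfl
      · norm_num at hcweq hzeq
        subst hcweq; subst hzeq
        norm_num at hz2
      · norm_num at hcweq hzeq
        subst hcweq; subst hzeq
        norm_num at hz2
      · -- α = 1, w = 0 : c = -1, z = -1, z^d + c = -2
        norm_num at hcweq hzeq
        subst hcweq; subst hzeq
        have h2 : ε * y ^ p = -2 := by rw [← h', hneg]; norm_num
        rcases hε with rfl | rfl
        · exact no_two_pow p hp3 y (Or.inr (by linarith))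
        · exact no_two_pow p hp3 y (Or.inl (by linarith))
      · exact hαw rfl
    · -- M ≥ 2
      have hMd1 : M ≤ M ^ (d - 1) := by
        calc M = M ^ 1 := (pow_one M).symm
          _ ≤ M ^ (d - 1) := pow_le_pow_right₀ (by linarith) (by omega)
      have hzlb2 : (M ^ (d - 1) - M) ^ 2 ≤ |z| ^ 2 :=
        pow_le_pow_left₀ (by linarith) hzlb 2
      by_cases hd3 : d = 3
      · subst hd3
        rcases le_or_gt 3 M with hM3 | hM3
        · norm_num at hzlb2 hcub
          have hz2' : z ^ 2 ≤ |c| := by rwa [sq_abs] at hz2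
          have e : (M ^ 2 - M) ^ 2 = M ^ 4 - 2 * M ^ 3 + M ^ 2 := by ring
          rw [e] at hzlb2
          have h4 : 3 * M ^ 3 ≤ M ^ 4 := by
            have e2 : M ^ 4 = M * M ^ 3 := by ring
            rw [e2]
            exact mul_le_mul_of_nonneg_right hM3 (pow_nonneg hM0 3)
          have h5 : 3 * M ≤ M ^ 2 := by
            have e2 : M ^ 2 = M * M := by ring
            rw [e2]
            exact mul_le_mul_of_nonneg_right hM3 hM0
          linarith [hz2', hzlb2, hcub, h4, h5, hM3]
        · have hMeq : M = 2 := by omega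
          have hpe : p = 3 := by
            have h31 : p ∣ 3 := ⟨m, hm0⟩
            have := Nat.le_of_dvd (by norm_num) h31
            omega
          subst hpe
          obtain ⟨ha1, ha2⟩ := abs_le.mp (le_trans hMα (show M ≤ 2 by omega))
          obtain ⟨hw1, hw2⟩ := abs_le.mp (le_trans hMw (show M ≤ 2 by omega))
          have hcweq : c = w - α ^ 3 := by rw [hw]; ring
          have hMeq' : max |α| |w| = 2 := by rw [← hM]; exact hMeq
          have hz2' : |w ^ 3 + (w - α ^ 3)| ^ 2 ≤ |w - α ^ 3| := by
            rw [← hcweq, ← hz]; exact hz2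
          clear hz2 hzc hz hw h' hwz hgap2 hzlb hcub hzlb2 hABc hABne hgap1 hBmax hB h hA
          interval_cases α <;> interval_cases w <;>
            first
              | exact hαw rfl
              | (revert hz2' hMeq'; decide)
      · -- d ≥ 5
        have hd5 : 5 ≤ d := by omega
        have hX : M ^ 4 ≤ M ^ (d - 1) := pow_le_pow_right₀ (by linarith) (by omega)
        have hXd : M ^ d = M * M ^ (d - 1) := by rw [← pow_succ']; congr 1; omega
        have hM8 : 8 * M ≤ M ^ 4 := by
          have c1 : (8:ℤ) ≤ M ^ 3 := by
            calc (8:ℤ) = 2 ^ 3 := by norm_num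
              _ ≤ M ^ 3 := pow_le_pow_left₀ (by norm_num) (by linarith) 3
          have c2 : 8 * M ≤ M ^ 3 * M := mul_le_mul_of_nonneg_right c1 hM0
          have c3 : M ^ 3 * M = M ^ 4 := by ring
          linarith
        have h8 : 8 * M ≤ M ^ (d - 1) := le_trans hM8 hX
        have hX1 : (1:ℤ) ≤ M ^ (d - 1) := by linarith
        have hkey : 8 * (M * M ^ (d - 1)) ≤ M ^ (d - 1) * M ^ (d - 1) := by
          have := mul_le_mul_of_nonneg_right h8 (le_trans zero_le_one hX1)
          linarith [this]
        have hMX : (2:ℤ) ≤ M * M ^ (d - 1) := by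
          have := mul_le_mul (by linarith : (2:ℤ) ≤ M) hX1 (by norm_num) (by linarith : (0:ℤ) ≤ M)
          linarith
        have hMM : M ≤ M * M := by
          have := mul_le_mul_of_nonneg_right (by linarith : (1:ℤ) ≤ M) hM0
          linarith
        have e : (M ^ (d - 1) - M) ^ 2
            = M ^ (d - 1) * M ^ (d - 1) - 2 * (M * M ^ (d - 1)) + M * M := by ring
        rw [e] at hzlb2
        rw [hXd] at hcub
        linarith [hz2, hzlb2, hcub, hkey, hMX, hMM]
end

section
/- Let f(x) = x^d + c with c an integer, c ∉ {0, −1}, and d ≥ 4 even. If f^3(α) = ε·y^p for some integers α, y, some prime p | d, and some ε = ±1, then α = ε·y^p or α = −ε·y^p, and ε·y^p is a fixed point of f. -/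
/-- Gap between distinct (n+1)-st powers of nonnegative integers is at least `b^n`. -/
lemma gap_pow (n : ℕ) (a b : ℤ) (ha : 0 ≤ a) (hb : 0 ≤ b) (hne : a ≠ b) :
    b ^ n ≤ |a ^ (n + 1) - b ^ (n + 1)| := by
  rcases lt_or_gt_of_ne hne with h | h
  · -- a < b
    have hb1 : 1 ≤ b := by omega
    have h1 : a ^ n ≤ b ^ n := pow_le_pow_left₀ ha h.le n
    have h2 : a ^ (n + 1) ≤ b ^ n * a := by
      rw [pow_succ]; exact mul_le_mul_of_nonneg_right h1 ha
    have h3 : b ^ (n + 1) = b ^ n * b := pow_succ b n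
    have hbn : 0 ≤ b ^ n := pow_nonneg hb n
    rw [abs_sub_comm, abs_of_nonneg (by nlinarith)]
    nlinarith
  · -- b < a
    have ha1 : 1 ≤ a := by omega
    have h1 : b ^ n ≤ a ^ n := pow_le_pow_left₀ hb h.le n
    have h2 : b ^ (n + 1) ≤ a ^ n * b := by
      rw [pow_succ]; exact mul_le_mul_of_nonneg_right h1 hb
    have h3 : a ^ (n + 1) = a ^ n * a := pow_succ a n
    have han : 0 ≤ a ^ n := pow_nonneg ha n
    rw [abs_of_nonneg (by nlinarith)]
    nlinarith

/-- Integers with small even d-th power (d ≥ 4) are in {-1,0,1}. -/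
lemma small_pow (d : ℕ) (hd : 4 ≤ d) (heven : Even d) (x : ℤ) (hx : x ^ d ≤ 15) :
    x = 0 ∨ x = 1 ∨ x = -1 := by
  by_contra hcon
  push_neg at hcon
  have h2 : 2 ≤ |x| := by
    rcases abs_cases x with ⟨h, _⟩ | ⟨h, _⟩ <;> omega
  have h16 : (16 : ℤ) ≤ |x| ^ d := by
    calc (16 : ℤ) = 2 ^ 4 := by norm_num
    _ ≤ 2 ^ d := pow_le_pow_right₀ (by norm_num) hd
    _ ≤ |x| ^ d := pow_le_pow_left₀ (by norm_num) h2 d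
  rw [heven.pow_abs] at h16
  omega

lemma final_contra (B X E : ℤ) (hB2 : 2 ≤ B) (hX3 : B ^ 3 ≤ X) (hE0 : 0 ≤ E)
    (hEX : X - B ≤ E) (hE' : E ^ 2 ≤ X * B + E) : False := by
  have hB0 : (0:ℤ) ≤ B := by omega
  have hXB3 : B * B * B ≤ X := by nlinarith [hX3]
  have hXmB : 6 ≤ X - B := by
    nlinarith [hXB3, mul_nonneg (show (0:ℤ) ≤ B - 2 by omega)
      (show (0:ℤ) ≤ B * B + 2 * B + 3 by nlinarith)]
  have hX0 : (0:ℤ) ≤ X := by omega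
  have h6 : (X - B) * (X - B - 1) ≤ E * (E - 1) := by
    nlinarith [mul_nonneg (sub_nonneg.2 hEX) (show (0:ℤ) ≤ E + (X - B) - 1 by omega)]
  have h7 : E * (E - 1) ≤ X * B := by nlinarith [hE']
  have h10 : (X - B) * (X - B - 1) ≤ X * B := le_trans h6 h7
  have h8 : X * (B * B * B) ≤ X * X := mul_le_mul_of_nonneg_left hXB3 hX0
  have h9 : 4 * (X * B) ≤ X * X := by
    nlinarith [h8, mul_nonneg (mul_nonneg hX0 hB0) (show (0:ℤ) ≤ B * B - 4 by nlinarith)]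
  have h11 : 2 * X ≤ X * B := by nlinarith
  have hBB : (0:ℤ) ≤ B * B := mul_nonneg hB0 hB0
  have hX8 : (8:ℤ) ≤ X := by omega
  nlinarith [h9, h10, h11, hBB, hX8]

theorem stmt8 (c : ℤ) (d : ℕ) (hc : c ≠ 0) (hc' : c ≠ -1) (hd : 4 ≤ d)
    (heven : Even d) (α y ε : ℤ) (p : ℕ) (hp : p.Prime) (hpd : p ∣ d)
    (hε : ε = 1 ∨ ε = -1)
    (h : (fun x : ℤ => x ^ d + c)^[3] α = ε * y ^ p) :
    (α = ε * y ^ p ∨ α = -(ε * y ^ p)) ∧ (ε * y ^ p) ^ d + c = ε * y ^ p := by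
  set t := ε * y ^ p with htdef
  obtain ⟨b, hb⟩ : ∃ b, b = α ^ d + c := ⟨_, rfl⟩
  obtain ⟨e, he⟩ : ∃ e, e = b ^ d + c := ⟨_, rfl⟩
  have ht : e ^ d + c = t := by
    rw [he, hb]
    simpa [Function.iterate_succ, Function.comp_apply] using h
  have hd0 : d ≠ 0 := by omega
  have habs : ∀ x : ℤ, |x| ^ d = x ^ d := fun x => heven.pow_abs x
  have hbd : b ^ d = e - c := by rw [he]; ring
  have had : α ^ d = b - c := by rw [hb]; ring
  have hbd0 : 0 ≤ b ^ d := heven.pow_nonneg b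
  have had0 : 0 ≤ α ^ d := heven.pow_nonneg α
  -- d = p * k with k ≥ 2
  obtain ⟨k, hk⟩ := hpd
  have hk2 : 2 ≤ k := by
    rcases Nat.lt_or_ge k 2 with hlt | hge
    · interval_cases k
      · omega
      · rw [mul_one] at hk
        have : p = 2 := (Nat.Prime.even_iff hp).mp (hk ▸ heven)
        omega
    · exact hge
  have hp2 : 2 ≤ p := hp.two_le
  -- Part 1 : e ^ 2 ≤ |c|
  have hE2 : e ^ 2 ≤ |c| := by
    set w : ℤ := |e| ^ k with hwdef
    have hw0 : 0 ≤ w := pow_nonneg (abs_nonneg e) k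
    have hwp : w ^ p = e ^ d := by
      rw [hwdef, ← pow_mul, show k * p = d by rw [hk, Nat.mul_comm]]
      exact habs e
    have hct : c = t - w ^ p := by rw [hwp, ← ht]; ring
    have habst : |t| = |y| ^ p := by
      rw [htdef, abs_mul, abs_pow]
      rcases hε with rfl | rfl <;> simp
    have htc : t = |y| ^ p ∨ t = -(|y| ^ p) := by
      rcases abs_choice t with h1 | h1
      · left; omega
      · right; omega
    have hwle : w ≤ |c| := by
      have hwwp : w ≤ w ^ p := by
        rcases eq_or_lt_of_le hw0 with h0 | h0
        · rw [← h0]; positivity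
        · exact le_self_pow₀ (by omega) (by omega)
      rcases htc with h1 | h1
      · -- t = |y|^p : gap argument
        have hYp : 0 ≤ |y| ^ p := pow_nonneg (abs_nonneg y) p
        have hne : |y| ≠ w := by
          intro heq
          rw [hct, h1, heq] at hc
          omega
        have hgap := gap_pow (p - 1) |y| w (abs_nonneg y) hw0 hne
        rw [show p - 1 + 1 = p by omega] at hgap
        have hcc : |c| = |(|y| ^ p - w ^ p)| := by rw [hct, h1]
        have hwp1 : w ≤ w ^ (p - 1) := by
          rcases eq_or_lt_of_le hw0 with h0 | h0
          · rw [← h0]; positivity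
          · exact le_self_pow₀ (by omega) (by omega)
        calc w ≤ w ^ (p - 1) := hwp1
          _ ≤ |(|y| ^ p - w ^ p)| := hgap
          _ = |c| := hcc.symm
      · -- t = -|y|^p
        have hYp : 0 ≤ |y| ^ p := pow_nonneg (abs_nonneg y) p
        have hwpn : 0 ≤ w ^ p := pow_nonneg hw0 p
        have : |c| = |y| ^ p + w ^ p := by
          rw [hct, h1, abs_of_nonpos (by omega)]; ring
        omega
    rcases eq_or_ne e 0 with rfl | he0
    · simpa using abs_nonneg c
    · have he1 : 1 ≤ |e| := by
        rcases abs_cases e with ⟨h1, _⟩ | ⟨h1, _⟩ <;> omega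
      have h1 : e ^ 2 = |e| ^ 2 := (sq_abs e).symm
      have h2 : |e| ^ 2 ≤ |e| ^ k := pow_le_pow_right₀ he1 hk2
      omega
  -- Part 2 : case analysis
  rcases lt_trichotomy c 0 with hcneg | hc0 | hcpos
  · -- c < 0, hence c ≤ -2
    have hc2 : c ≤ -2 := by omega
    have habsc : |c| = -c := abs_of_neg hcneg
    rw [habsc] at hE2
    rcases lt_or_ge |b| 2 with hBsmall | hBbig
    · -- |b| ≤ 1
      have hbrange : -1 ≤ b ∧ b ≤ 1 := by
        constructor <;> rcases abs_cases b with ⟨h1, _⟩ | ⟨h1, _⟩ <;> omega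
      have hb1 : b = -1 ∨ b = 0 ∨ b = 1 := by omega
      rcases hb1 with rfl | rfl | rfl
      · -- b = -1 : b^d = 1, e = 1 + c
        have hbd1 : (-1 : ℤ) ^ d = 1 := heven.neg_one_pow
        have hee : e = 1 + c := by rw [he, hbd1]
        have hcc : c = -2 := by
          have h1 : (1 + c) ^ 2 ≤ -c := by rw [← hee]; exact hE2
          by_contra hne
          have h3 : c ≤ -3 := by omega
          nlinarith [mul_nonneg (show (0:ℤ) ≤ -(c + 3) by omega) (show (0:ℤ) ≤ -c by omega)]
        subst hcc
        have hee' : e = -1 := by omega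
        have hαd : α ^ d = 1 := by rw [had]; norm_num
        have hα : α = 1 ∨ α = -1 := by
          rcases small_pow d hd heven α (by omega) with rfl | rfl | rfl
          · rw [zero_pow hd0] at hαd; omega
          · left; rfl
          · right; rfl
        have htval : t = -1 := by rw [← ht, hee', hbd1]; ring
        refine ⟨?_, ?_⟩
        · rw [htval]; rcases hα with rfl | rfl
          · right; norm_num
          · left; norm_num
        · rw [htval, hbd1]; ring
      · -- b = 0 : e = c, c^2 ≤ -c contradiction
        have hee : e = c := by rw [he, zero_pow hd0]; ring
        rw [hee] at hE2
        nlinarith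
      · -- b = 1 : e = 1 + c, c = -2, α^d = 3 contradiction
        have hee : e = 1 + c := by rw [he, one_pow]
        have hcc : c = -2 := by
          have h1 : (1 + c) ^ 2 ≤ -c := by rw [← hee]; exact hE2
          by_contra hne
          have h3 : c ≤ -3 := by omega
          nlinarith [mul_nonneg (show (0:ℤ) ≤ -(c + 3) by omega) (show (0:ℤ) ≤ -c by omega)]
        subst hcc
        have hαd : α ^ d = 3 := by rw [had]; norm_num
        exfalso
        rcases small_pow d hd heven α (by omega) with rfl | rfl | rfl
        · rw [zero_pow hd0] at hαd; omega
        · rw [one_pow] at hαd; omega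
        · rw [heven.neg_one_pow] at hαd; omega
    · -- 2 ≤ |b|
      by_cases hAB : |α| = |b|
      · have h1 : α ^ d = b ^ d := by rw [← habs α, ← habs b, hAB]
        have heb : e = b := by omega
        have htb : t = b := by rw [← ht, heb]; omega
        refine ⟨?_, ?_⟩
        · exact abs_eq_abs.mp (by rw [hAB, htb])
        · rw [htb]; omega
      · exfalso
        obtain ⟨m, rfl⟩ : ∃ m, d = m + 1 := ⟨d - 1, by omega⟩
        have hgap := gap_pow m |α| |b| (abs_nonneg α) (abs_nonneg b) hAB
        rw [habs α, habs b] at hgap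
        have h2 : α ^ (m + 1) - b ^ (m + 1) = b - e := by rw [had, hbd]; ring
        rw [h2] at hgap
        have hbe : |b - e| ≤ |b| + |e| := by
          rw [sub_eq_add_neg]
          exact (abs_add_le b (-e)).trans (by rw [abs_neg])
        have hE : |e| ^ 2 ≤ b ^ (m + 1) + |e| := by
          have h3 : -c = b ^ (m + 1) - e := by omega
          have h4 : -|e| ≤ e := neg_abs_le e
          have h5 : e ^ 2 = |e| ^ 2 := (sq_abs e).symm
          omega
        have hbpow : b ^ (m + 1) = |b| ^ m * |b| := by
          rw [← pow_succ, habs b]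
        have hX3 : |b| ^ 3 ≤ |b| ^ m := pow_le_pow_right₀ (by omega) (by omega)
        refine final_contra |b| (|b| ^ m) |e| hBbig hX3 (abs_nonneg e) (by omega) ?_
        have h5 : e ^ 2 = |e| ^ 2 := (sq_abs e).symm
        omega
  · omega
  · -- c > 0
    exfalso
    have h1 : c ≤ e := by omega
    have habsc : |c| = c := abs_of_pos hcpos
    rw [habsc] at hE2
    have he1 : e = 1 := by nlinarith
    have hc1 : c = 1 := by nlinarith
    have hb0 : b = 0 := by
      have : b ^ d = 0 := by omega
      exact (pow_eq_zero_iff hd0).mp this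
    rw [hb0, hc1] at had
    omega
end

section
/- Let f(x) = x^d − 1 with d ≥ 4 even. If f^3(α) = ε·y^p for some integers α, y, some prime p | d, and some ε = ±1, then α ∈ {0, 1, −1}, ε·y^p ∈ {0, −1}, and ε·y^p is a point of exact period 2 for f. -/
lemma natkey9 (p m n : ℕ) (hp : 2 ≤ p) (hn : 1 ≤ n) (h : m ^ p = n ^ p + 1) :
    False := by
  have hm : n < m := by
    by_contra hc
    push_neg at hc
    have := Nat.pow_le_pow_left hc p
    omega
  have hm1 : n + 1 ≤ m := hm
  have h1 : n ^ (p - 1) + 1 ≤ (n + 1) ^ (p - 1) := by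
    have : n ^ (p - 1) < (n + 1) ^ (p - 1) :=
      Nat.pow_lt_pow_left (by omega) (by omega)
    omega
  have h2 : (n + 1) ^ p = (n + 1) * (n + 1) ^ (p - 1) := by
    rw [← pow_succ']
    congr 1
    omega
  have h3 : (n + 1) ^ p ≥ (n + 1) * (n ^ (p - 1) + 1) :=
    h2 ▸ Nat.mul_le_mul_left _ h1
  have h4 : n * n ^ (p - 1) = n ^ p := by
    rw [← pow_succ']
    congr 1
    omega
  have h5 : m ^ p ≥ (n + 1) ^ p := Nat.pow_le_pow_left hm1 p
  have h6 : n ^ (p - 1) ≥ 1 := Nat.one_le_pow _ _ (by omega)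
  nlinarith

lemma small9 (d : ℕ) (hd : 4 ≤ d) (heven : Even d) (t : ℤ) (h : t ^ d ≤ 2) :
    t = 0 ∨ t = 1 ∨ t = -1 := by
  by_contra hc
  push_neg at hc
  obtain ⟨h0, h1, h2⟩ := hc
  have habs : (2 : ℤ) ≤ |t| := by
    rw [le_abs]; omega
  have he : |t| ^ d = t ^ d := Even.pow_abs heven t
  have h16 : (16 : ℤ) ≤ |t| ^ d := by
    calc (16 : ℤ) = 2 ^ 4 := by norm_num
    _ ≤ 2 ^ d := pow_le_pow_right₀ (by norm_num) hd
    _ ≤ |t| ^ d := pow_le_pow_left₀ (by norm_num) habs d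
  omega

lemma key9 (d p : ℕ) (hd : 4 ≤ d) (heven : Even d) (hp : p.Prime) (hpd : p ∣ d)
    (ε y b : ℤ) (hε : ε = 1 ∨ ε = -1) (h : b ^ d - 1 = ε * y ^ p) :
    b = 0 ∨ b = 1 ∨ b = -1 := by
  by_contra hc
  push_neg at hc
  obtain ⟨h0, h1, h2⟩ := hc
  have habs : (2 : ℤ) ≤ |b| := by
    rw [le_abs]; omega
  have he : |b| ^ d = b ^ d := Even.pow_abs heven b
  have h16 : (16 : ℤ) ≤ b ^ d := by
    rw [← he]
    calc (16 : ℤ) = 2 ^ 4 := by norm_num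
    _ ≤ 2 ^ d := pow_le_pow_right₀ (by norm_num) hd
    _ ≤ |b| ^ d := pow_le_pow_left₀ (by norm_num) habs d
  -- u := b ^ (d / p), then u ^ p = b ^ d
  set u : ℤ := b ^ (d / p) with hu_def
  have hup : u ^ p = b ^ d := by
    rw [hu_def, ← pow_mul, Nat.div_mul_cancel hpd]
  have habsu : |u| ^ p = b ^ d := by
    rw [← abs_pow, hup, abs_of_nonneg (by omega)]
  have hcpos : (15 : ℤ) ≤ ε * y ^ p := by omega
  have habsy : |y| ^ p = ε * y ^ p := by
    rw [← abs_pow]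
    rcases hε with rfl | rfl
    · rw [abs_of_nonneg (by linarith [hcpos])]; ring
    · rw [abs_of_nonpos (by nlinarith [hcpos])]; ring
  have heq : |u| ^ p = |y| ^ p + 1 := by omega
  -- move to ℕ
  have hp2 := hp.two_le
  have hnat : u.natAbs ^ p = y.natAbs ^ p + 1 := by
    have h' := heq
    rw [Int.abs_eq_natAbs, Int.abs_eq_natAbs] at h'
    exact_mod_cast h'
  have hy1 : 1 ≤ y.natAbs := by
    by_contra h'
    have hy0 : y.natAbs = 0 := by omega
    rw [hy0, Nat.zero_pow (by omega)] at hnat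
    have h1' : (u.natAbs : ℤ) ^ p = 1 := by exact_mod_cast hnat
    have h16u : (16 : ℤ) ≤ (u.natAbs : ℤ) ^ p := by
      rw [← Int.abs_eq_natAbs]; omega
    omega
  exact natkey9 p u.natAbs y.natAbs hp.two_le hy1 hnat

theorem stmt9 (d : ℕ) (hd : 4 ≤ d) (heven : Even d)
    (α y ε : ℤ) (p : ℕ) (hp : p.Prime) (hpd : p ∣ d) (hε : ε = 1 ∨ ε = -1)
    (h : (fun x : ℤ => x ^ d - 1)^[3] α = ε * y ^ p) :
    (α = 0 ∨ α = 1 ∨ α = -1) ∧ (ε * y ^ p = 0 ∨ ε * y ^ p = -1) ∧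
      ((fun x : ℤ => x ^ d - 1)^[2] (ε * y ^ p) = ε * y ^ p ∧
        (ε * y ^ p) ^ d - 1 ≠ ε * y ^ p) := by
  have hd0 : d ≠ 0 := by omega
  simp only [Function.iterate_succ, Function.iterate_zero, Function.comp_apply,
    id_eq] at h
  have hbsmall := key9 d p hd heven hp hpd ε y ((α ^ d - 1) ^ d - 1) hε h
  have powsmall : ∀ t : ℤ, (t = 0 ∨ t = 1 ∨ t = -1) → t ^ d = 0 ∨ t ^ d = 1 := by
    rintro t (rfl | rfl | rfl)
    · left; exact zero_pow hd0
    · right; exact one_pow d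
    · right; exact heven.neg_one_pow
  have hbpow := powsmall _ hbsmall
  have hc : ε * y ^ p = -1 ∨ ε * y ^ p = 0 := by omega
  have hasmall : α ^ d - 1 = 0 ∨ α ^ d - 1 = 1 ∨ α ^ d - 1 = -1 := by
    apply small9 d hd heven
    have : (α ^ d - 1) ^ d = ((α ^ d - 1) ^ d - 1) + 1 := by ring
    omega
  have hapow := powsmall _ hasmall
  have hαsmall : α = 0 ∨ α = 1 ∨ α = -1 := by
    apply small9 d hd heven
    omega
  refine ⟨hαsmall, by omega, ?_⟩
  simp only [Function.iterate_succ, Function.iterate_zero, Function.comp_apply, id_eq]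
  rcases hc with h' | h' <;> rw [h']
  · rw [show ((-1 : ℤ)) ^ d = 1 from heven.neg_one_pow]
    norm_num [zero_pow hd0]
  · rw [zero_pow hd0]
    norm_num [heven.neg_one_pow]
end

section
/- Let f(x) = x^2 + c with c a nonzero integer. If f^4(α) = ε·y^2 for some integers α, y and some ε = ±1, then α = ε·y^2 or α = −ε·y^2, and ε·y^2 is a fixed point of f or a point of exact period 2 for f. -/
set_option maxHeartbeats 2000000
set_option linter.unusedVariables false

lemma abs_sq_succ (x : ℤ) : x^2 + 1 ≤ (|x|+1)^2 := by nlinarith [abs_nonneg x, sq_abs x]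
lemma abs_lt_of_sq_lt {u v : ℤ} (h : u^2 < v^2) : |u| < |v| := by
  by_contra hc
  push_neg at hc
  have h1 : v^2 ≤ u^2 := by nlinarith [abs_nonneg v, sq_abs u, sq_abs v]
  linarith
lemma sq_le_pred {u v : ℤ} (h : u^2 < v^2) : u^2 ≤ (|v| - 1)^2 := by
  have h1 := abs_lt_of_sq_lt h
  have h2 : |u| ≤ |v| - 1 := by linarith
  nlinarith [abs_nonneg u, sq_abs u]
lemma sq_ge_succ {u v : ℤ} (h : v^2 < u^2) : (|v| + 1)^2 ≤ u^2 := by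
  have h1 := abs_lt_of_sq_lt h
  have h2 : |v| + 1 ≤ |u| := by linarith
  nlinarith [abs_nonneg v, sq_abs u]
lemma sq_eq_cases {u v : ℤ} (h : u^2 = v^2) : u = v ∨ u = -v := by
  have h1 : (u - v) * (u + v) = 0 := by ring_nf; linarith
  rcases mul_eq_zero.mp h1 with h2 | h2
  · left; linarith
  · right; linarith
lemma sq_diff_one {x z : ℤ} (h : x^2 = z^2 + 1) : z = 0 ∧ x^2 = 1 := by
  have h1 : (x - z) * (x + z) = 1 := by ring_nf; linarith
  rcases Int.mul_eq_one_iff_eq_one_or_neg_one.mp h1 with ⟨h2, h3⟩ | ⟨h2, h3⟩ <;>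
    constructor <;> nlinarith


lemma no_two (y : ℤ) : ¬ ((2:ℤ) = y^2 ∨ (2:ℤ) = -y^2) := by
  rintro (h | h)
  · have h1 : -1 ≤ y := by nlinarith [sq_nonneg (y+1)]
    have h2 : y ≤ 1 := by nlinarith [sq_nonneg (y-1)]
    interval_cases y <;> omega
  · nlinarith [sq_nonneg y]

lemma kill2 (m t a y : ℤ) (hm : 1 ≤ m) (hmt : m = t^2 - t)
    (hty : t = y^2 ∨ t = -y^2) (ha : a^2 = t^2 - 2*t) : False := by
  have h0 : (t-1)^2 = a^2 + 1 := by ring_nf; linarith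
  obtain ⟨ha0, ht1⟩ := sq_diff_one h0
  have hd : t * (t - 2) = 0 := by nlinarith
  rcases mul_eq_zero.mp hd with h | h
  · rw [h] at hmt; simp at hmt; omega
  · have : t = 2 := by linarith
    rw [this] at hty; exact no_two y hty


lemma hardL1 (m a0 a1 a2 a3 t y : ℤ) (hm : 1 ≤ m)
    (h1 : a0^2 = m + a1) (h2 : a1^2 = m + a2) (h3 : a2^2 = m + a3)
    (h4 : a3^2 = m + t) (hty : t = y^2 ∨ t = -y^2)
    (habs32 : |a2| < |a3|) (hL1 : a1^2 < a2^2) : False := by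
  have e1 : a1^2 ≤ (|a2| - 1)^2 := sq_le_pred hL1
  have habs21 := abs_lt_of_sq_lt hL1
  have e2 : a2 + 2*|a2| - 1 ≤ a3 := by linarith [sq_abs a2]
  have ha2one : 1 ≤ |a2| := by linarith [abs_nonneg a1]
  have ha3pos : 0 ≤ a3 := by linarith [neg_abs_le a2]
  have ha3 : |a3| = a3 := abs_of_nonneg ha3pos
  have ha3lb : |a2| + 1 ≤ a3 := by rw [← ha3]; linarith
  have e_a2sq : a2^2 ≤ (a3-1)^2 := by
    have : |a2| ≤ a3 - 1 := by linarith
    calc a2^2 = |a2|^2 := (sq_abs a2).symm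
    _ ≤ (a3-1)^2 := pow_le_pow_left₀ (abs_nonneg a2) this 2
  have ht_pos : 3*a3 - 1 ≤ t := by linarith
  have hty1 : t = y^2 := by
    rcases hty with h | h
    · exact h
    · exfalso; nlinarith [sq_nonneg y, abs_nonneg a2]
  -- KEY : 2*a3 - 1 ≤ m
  have hysq : y^2 < a3^2 := by nlinarith
  have hkey : 2*a3 - 1 ≤ m := by
    have := sq_le_pred hysq
    rw [ha3] at this
    nlinarith
  have ha3eq : a3 = a2^2 + a2 - a1^2 := by linarith
  have key2 : 2*a3 - 1 ≤ a1^2 - a2 := by linarith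
  rcases lt_trichotomy (a0^2) (a1^2) with hL0 | hE0 | hM0
  · -- L0
    have e3 : a0^2 ≤ (|a1| - 1)^2 := sq_le_pred hL0
    have habs10 := abs_lt_of_sq_lt hL0
    have hA : 1 ≤ |a1| := by linarith [abs_nonneg a0]
    have e4 : a1 + 2*|a1| - 1 ≤ a2 := by linarith [sq_abs a1]
    have ha2pos : 0 ≤ a2 := by linarith [neg_abs_le a1]
    have ha2 : |a2| = a2 := abs_of_nonneg ha2pos
    have ha2lb : |a1| + 1 ≤ a2 := by rw [← ha2]; linarith
    rcases abs_cases a1 with ⟨hc, hcs⟩ | ⟨hc, hcs⟩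
    · -- a1 ≥ 0
      rw [hc] at e3 e4 hA ha2lb
      have hd2 : 3*a1 - 1 ≤ a2 := by nlinarith
      nlinarith [mul_nonneg (by linarith : (0:ℤ) ≤ a2 - 3*a1 + 1) (by linarith : (0:ℤ) ≤ a2 + 3*a1 - 1), sq_nonneg (a1 - 1), mul_nonneg (by linarith : (0:ℤ) ≤ a2 - 3*a1 + 1) (by linarith : (0:ℤ) ≤ a1 - 1)]
    · -- a1 < 0
      rw [hc] at e3 e4 hA ha2lb
      have ha0b : a0^2 = a1^2 + a1 - a2 := by linarith
      have hlt : a0^2 < (-a1 - 1)^2 := by nlinarith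
      have e5 : a0^2 ≤ (-a1 - 2)^2 := by
        have h6 := sq_le_pred hlt
        have h7 : |(-a1 - 1)| = -a1 - 1 := abs_of_nonneg (by linarith)
        rw [h7] at h6; linarith [h6]
      have hd2 : -3*a1 - 4 ≤ a2 := by nlinarith
      nlinarith [mul_nonneg (by linarith : (0:ℤ) ≤ a2 + 3*a1 + 4) (by linarith : (0:ℤ) ≤ a2 - a1 - 1), sq_nonneg (a1 + 1), mul_nonneg (by linarith : (0:ℤ) ≤ a2 + a1) (by linarith : (0:ℤ) ≤ -a1 - 1)]
  · -- E0 : a1 = a2 contra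
    have : a1 = a2 := by linarith
    rw [this] at hL1; exact lt_irrefl _ hL1
  · -- M0
    have e3 : (|a1| + 1)^2 ≤ a0^2 := sq_ge_succ hM0
    have e4 : a2 ≤ a1 - 2*|a1| - 1 := by linarith [sq_abs a1]
    have ha2neg : a2 ≤ -|a1| - 1 := by linarith [le_abs_self a1, neg_abs_le a1]
    have ha2 : |a2| = -a2 := abs_of_neg (by linarith [abs_nonneg a1])
    have ha3lb2 : -a2 + 1 ≤ a3 := by rw [← ha2]; linarith
    have keyII : 3*a1^2 + 3*(-a2) + 1 ≥ 2*a2^2 := by linarith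
    rcases abs_cases a1 with ⟨hc, hcs⟩ | ⟨hc, hcs⟩
    · -- a1 ≥ 0 ; then a1 ≥ 1? a1 could be 0: |a1| = a1 = 0 then e4: a2 ≤ -1 fine
      rw [hc] at e3 e4 ha2neg
      have ha0b : a0^2 = a1^2 + a1 - a2 := by linarith
      rcases eq_or_lt_of_le e3 with heq | hlt
      · -- a0² = (a1+1)² → -a2 = a1+1 → a3 = a1 contra
        have hx : (a1+1)^2 = a1^2 + 2*a1 + 1 := by ring
        have hb : a2 = -a1 - 1 := by linarith
        have hz : a3 = a1 := by rw [hb] at ha3eq; ring_nf at ha3eq; linarith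
        linarith
      · have e5 : (a1 + 2)^2 ≤ a0^2 := by
          have h6 := sq_ge_succ hlt
          have h7 : |a1 + 1| = a1 + 1 := abs_of_nonneg (by linarith)
          rw [h7] at h6; linarith
        have hx2 : (a1+2)^2 = a1^2 + 4*a1 + 4 := by ring
        have hB : -a2 ≥ 3*a1 + 4 := by linarith
        nlinarith [mul_nonneg (by linarith : (0:ℤ) ≤ -a2 - 3*a1 - 4) (by linarith : (0:ℤ) ≤ -a2 + 3*a1 + 4), sq_nonneg (a1 + 1), mul_nonneg (by linarith : (0:ℤ) ≤ -a2 - 3*a1 - 4) (by linarith : (0:ℤ) ≤ a1)]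
    · -- a1 ≤ 0
      rw [hc] at e3 e4 ha2neg
      have hB : -a2 ≥ -3*a1 + 1 := by linarith
      nlinarith [mul_nonneg (by linarith : (0:ℤ) ≤ -a2 + 3*a1 - 1) (by linarith : (0:ℤ) ≤ -a2 - 3*a1 + 1), sq_nonneg (a1 + 1), sq_nonneg (a1 - 1), mul_nonneg (by linarith : (0:ℤ) ≤ -a2 + 3*a1 - 1) (by linarith : (0:ℤ) ≤ -a1), mul_nonneg (by linarith : (0:ℤ) ≤ -a2 - 1) (by linarith : (0:ℤ) ≤ -a2 - 1)]

lemma caseL2 (m a0 a1 a2 a3 t y : ℤ) (hm : 1 ≤ m)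
    (h1 : a0^2 = m + a1) (h2 : a1^2 = m + a2) (h3 : a2^2 = m + a3)
    (h4 : a3^2 = m + t) (hty : t = y^2 ∨ t = -y^2)
    (hL2 : a2^2 < a3^2) :
    a0^2 = t^2 ∧ (t^2 - m = t ∨ ((t^2 - m)^2 - m = t ∧ t^2 - m ≠ t)) := by
  have habs32 := abs_lt_of_sq_lt hL2
  rcases lt_trichotomy (a1^2) (a2^2) with hL1 | hE1 | hM1
  · exact (hardL1 m a0 a1 a2 a3 t y hm h1 h2 h3 h4 hty habs32 hL1).elim
  · -- E1
    exfalso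
    have : a2 = a3 := by linarith
    rw [this] at hL2; exact lt_irrefl _ hL2
  · -- M1
    have e1 : (|a2|+1)^2 ≤ a1^2 := sq_ge_succ hM1
    have e2 : a3 ≤ -|a2| - 1 := by linarith [le_abs_self a2, sq_abs a2]
    rcases lt_trichotomy (a0^2) (a1^2) with hL0 | hE0 | hM0
    · -- L0
      have e3 : a0^2 ≤ (|a1| - 1)^2 := sq_le_pred hL0
      have habs10 := abs_lt_of_sq_lt hL0
      have habs12 := abs_lt_of_sq_lt hM1
      have hA : 1 ≤ |a1| := by linarith [abs_nonneg a0]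
      have e4 : a1 + 2*|a1| - 1 ≤ a2 := by linarith [sq_abs a1]
      rcases abs_cases a1 with ⟨hc, hcs⟩ | ⟨hc, hcs⟩
      · -- a1 ≥ 0 : contradiction
        exfalso
        rw [hc] at e4 hA habs12
        linarith [le_abs_self a2]
      · -- a1 < 0 : solution family
        rw [hc] at e3 e4 hA habs12
        have ha2ub : a2 ≤ -a1 - 1 := by linarith [le_abs_self a2]
        have ha2lb : -a1 - 1 ≤ a2 := by linarith
        have ea2 : a2 = -a1 - 1 := le_antisymm ha2ub ha2lb
        have hmv : m = a1^2 + a1 + 1 := by rw [ea2] at h2; linarith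
        have ea3 : a3 = a1 := by rw [ea2] at h3; nlinarith
        have et : t = -a1 - 1 := by rw [ea3, hmv] at h4; linarith
        have hq : t^2 - m = a1 := by rw [et, hmv]; ring
        refine ⟨?_, Or.inr ⟨by rw [hq, hmv, et]; ring, by rw [hq, et]; omega⟩⟩
        have : a0^2 = (a1+1)^2 := by rw [hmv] at h1; ring_nf; ring_nf at h1; linarith
        rw [et]; rw [this]; ring
    · -- E0: a1 = a2 contra M1
      exfalso
      have : a1 = a2 := by linarith
      rw [this] at hM1; exact lt_irrefl _ hM1
    · -- M0: contra
      exfalso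
      have e3 : (|a1|+1)^2 ≤ a0^2 := sq_ge_succ hM0
      have e4 : a2 ≤ a1 - 2*|a1| - 1 := by linarith [sq_abs a1]
      have e5 : a2 ≤ -|a1| - 1 := by linarith [le_abs_self a1, neg_abs_le a1]
      have e6 : |a1| + 1 ≤ -a2 := by linarith
      have e7 : (|a1|+1)^2 ≤ (-a2)^2 := pow_le_pow_left₀ (by positivity) e6 2
      have e8 : a1^2 + 1 ≤ (|a1|+1)^2 := abs_sq_succ a1
      nlinarith [neg_sq a2]


lemma caseE2 (m a0 a1 a2 a3 t y : ℤ) (hm : 1 ≤ m)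
    (h1 : a0^2 = m + a1) (h2 : a1^2 = m + a2) (h3 : a2^2 = m + a3)
    (h4 : a3^2 = m + t) (hty : t = y^2 ∨ t = -y^2)
    (hE2 : a2^2 = a3^2) :
    a0^2 = t^2 ∧ (t^2 - m = t ∨ ((t^2 - m)^2 - m = t ∧ t^2 - m ≠ t)) := by
  have ht : a3 = t := by linarith
  have htt : t^2 = m + t := by rw [← ht]; linarith
  have hmt : m = t^2 - t := by linarith
  refine ⟨?_, Or.inl (by linarith)⟩
  have h2t : a2^2 = t^2 := by rw [← ht]; linarith
  rcases sq_eq_cases h2t with hc | hc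
  · have ha1 : a1^2 = t^2 := by rw [hc] at h2; linarith
    rcases sq_eq_cases ha1 with hc1 | hc1
    · rw [hc1] at h1; linarith
    · exact absurd (kill2 m t a0 y hm hmt hty (by rw [hc1] at h1; linarith)) not_false
  · exact absurd (kill2 m t a1 y hm hmt hty (by rw [hc] at h2; linarith)) not_false


lemma caseM2 (m a0 a1 a2 a3 t y : ℤ) (hm : 1 ≤ m)
    (h1 : a0^2 = m + a1) (h2 : a1^2 = m + a2) (h3 : a2^2 = m + a3)
    (h4 : a3^2 = m + t) (hty : t = y^2 ∨ t = -y^2)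
    (hM2 : a3^2 < a2^2) :
    a0^2 = t^2 ∧ (t^2 - m = t ∨ ((t^2 - m)^2 - m = t ∧ t^2 - m ≠ t)) := by
  rcases lt_trichotomy (a1^2) (a2^2) with hL1 | hE1 | hM1
  · -- L1: a1² < a2²
    have e1 : a1^2 ≤ (|a2| - 1)^2 := sq_le_pred hL1
    have e2 : a2 + 2*|a2| - 1 ≤ a3 := by linarith [sq_abs a2]
    have habs : |a3| < |a2| := abs_lt_of_sq_lt hM2
    rcases le_or_gt 0 a2 with hp | hn
    · exfalso
      have ha2 : |a2| = a2 := abs_of_nonneg hp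
      have : a2 ≤ 0 := by linarith [le_abs_self a3]
      have : a2 = 0 := le_antisymm this hp
      rw [this] at ha2 habs; simp at habs
      linarith [abs_nonneg a3]
    · have ha2 : |a2| = -a2 := abs_of_neg hn
      have ha3nn : 0 ≤ a3 := by linarith
      have ha3 : |a3| = a3 := abs_of_nonneg ha3nn
      have ea2 : a2 = -(a3+1) := by linarith
      have ea1 : a1^2 = a3^2 := by rw [ea2] at h2 h3; nlinarith
      have et : t = -a3 - 1 := by rw [ea2] at h3; nlinarith
      have hm4 : m = a3^2 - t := by linarith
      have hmv : m = a3^2 + a3 + 1 := by rw [hm4, et]; ring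
      have hq : t^2 - m = a3 := by rw [et, hmv]; ring
      refine ⟨?_, Or.inr ⟨by rw [hq, et, hmv]; ring, by rw [hq, et]; omega⟩⟩
      rcases sq_eq_cases ea1 with hc | hc
      · rw [hc, hmv] at h1; rw [et]; nlinarith
      · rw [hc, hmv] at h1
        have : a0^2 = a3^2 + 1 := by nlinarith
        obtain ⟨hz, ho⟩ := sq_diff_one this
        rw [et, hz]; nlinarith
  · -- E1: a1² = a2² → a2 = a3 → contra
    exfalso
    have : a2 = a3 := by linarith
    rw [this] at hM2; exact lt_irrefl _ hM2
  · -- M1: a2² < a1²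
    exfalso
    have e1 : (|a2|+1)^2 ≤ a1^2 := sq_ge_succ hM1
    have e2 : a3 ≤ -|a2| - 1 := by linarith [le_abs_self a2, sq_abs a2]
    have e3 : |a2| + 1 ≤ -a3 := by linarith
    have e4 : (|a2|+1)^2 ≤ (-a3)^2 := pow_le_pow_left₀ (by positivity) e3 2
    have e5 : (-a3)^2 = a3^2 := neg_sq a3
    have e6 : a2^2 + 1 ≤ (|a2|+1)^2 := abs_sq_succ a2
    linarith


lemma key (m a0 a1 a2 a3 t y : ℤ) (hm : 1 ≤ m)
    (h1 : a0^2 = m + a1) (h2 : a1^2 = m + a2) (h3 : a2^2 = m + a3)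
    (h4 : a3^2 = m + t) (hty : t = y^2 ∨ t = -y^2) :
    a0^2 = t^2 ∧ (t^2 - m = t ∨ ((t^2 - m)^2 - m = t ∧ t^2 - m ≠ t)) := by
  rcases lt_trichotomy (a2^2) (a3^2) with hL2 | hE2 | hM2
  · exact caseL2 m a0 a1 a2 a3 t y hm h1 h2 h3 h4 hty hL2
  · exact caseE2 m a0 a1 a2 a3 t y hm h1 h2 h3 h4 hty hE2
  · exact caseM2 m a0 a1 a2 a3 t y hm h1 h2 h3 h4 hty hM2

theorem stmt10 (c : ℤ) (hc : c ≠ 0) (α y ε : ℤ) (hε : ε = 1 ∨ ε = -1)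
    (h : (fun x : ℤ => x ^ 2 + c)^[4] α = ε * y ^ 2) :
    (α = ε * y ^ 2 ∨ α = -(ε * y ^ 2)) ∧
      ((ε * y ^ 2) ^ 2 + c = ε * y ^ 2 ∨
        ((fun x : ℤ => x ^ 2 + c)^[2] (ε * y ^ 2) = ε * y ^ 2 ∧
          (ε * y ^ 2) ^ 2 + c ≠ ε * y ^ 2)) := by
  have hit : (fun x : ℤ => x ^ 2 + c)^[4] α = ((((α^2+c)^2+c)^2+c)^2+c) := by
    simp [Function.iterate_succ_apply']
  rw [hit] at h
  set t : ℤ := ε * y ^ 2 with htdef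
  have hty : t = y^2 ∨ t = -y^2 := by
    rcases hε with he | he <;> rw [htdef, he] <;> [left; right] <;> ring
  have hcneg : c < 0 := by
    rcases lt_or_gt_of_ne hc with hlt | hgt
    · exact hlt
    exfalso
    have ha1 : c ≤ α^2 + c := by nlinarith [sq_nonneg α]
    have ha2 : c ≤ (α^2+c)^2 + c := by nlinarith [sq_nonneg (α^2+c)]
    have ha3 : c ≤ ((α^2+c)^2+c)^2 + c := by nlinarith [sq_nonneg ((α^2+c)^2+c)]
    set b : ℤ := ((α^2+c)^2+c)^2 + c with hbdef
    have htb : t = b^2 + c := h.symm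
    have htpos : 0 < t := by nlinarith [sq_nonneg b]
    have hty1 : t = y^2 := by
      rcases hty with h' | h'
      · exact h'
      · exfalso; nlinarith [sq_nonneg y]
    have hblt : b^2 < y^2 := by nlinarith
    have hstep : (|b| + 1)^2 ≤ y^2 := by
      have h1 := abs_lt_of_sq_lt hblt
      have h2 : |b| + 1 ≤ |y| := by linarith
      nlinarith [abs_nonneg b, sq_abs y]
    have : 2*|b| + 1 ≤ c := by nlinarith [sq_abs b]
    linarith [le_abs_self b]
  set m : ℤ := -c with hmdef
  have hm : 1 ≤ m := by omega
  obtain ⟨g1, g2⟩ := key m α (α^2+c) ((α^2+c)^2+c) (((α^2+c)^2+c)^2+c) t y hm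
    (by rw [hmdef]; ring) (by rw [hmdef]; ring) (by rw [hmdef]; ring)
    (by rw [hmdef]; linarith) hty
  constructor
  · rcases sq_eq_cases g1 with h' | h'
    · exact Or.inl h'
    · exact Or.inr h'
  · have hit2 : (fun x : ℤ => x ^ 2 + c)^[2] t = ((t^2+c)^2+c) := by
      simp [Function.iterate_succ_apply']
    have hrw : t^2 - m = t^2 + c := by rw [hmdef]; ring
    rcases g2 with h' | ⟨h', h''⟩
    · exact Or.inl (by rw [← hrw]; exact h')
    · refine Or.inr ⟨?_, by rw [← hrw]; exact h''⟩
      rw [hit2, ← hrw]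
      rw [hmdef] at h' ⊢
      linarith [h']
end

section
/- Let K be a field of characteristic zero, w(x) ∈ K[x] monic and irreducible, and u(x) = x^d + c for some c ∈ K and d ≥ 2; if d is even, assume w has even degree. If the composition w(u(x)) is reducible over K, then w(u(0)) = y^p for some y ∈ K and some prime p dividing d. -/
open Polynomial IntermediateField

universe u

-- Key prime-step lemma: if `f` is monic irreducible and `f (X^p)` is reducible,
-- then `f 0` is a `p`-th power (assuming `deg f` even or `p` odd).
theorem auxA {K : Type u} [Field K] {f : K[X]} (hmonic : f.Monic) (hirr : Irreducible f)
    {p : ℕ} (hp : p.Prime) (hn : Even f.natDegree ∨ Odd p)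
    (hred : ¬Irreducible (f.comp ((X : K[X]) ^ p))) :
    ∃ y : K, f.eval 0 = y ^ p := by
  by_contra hy
  push_neg at hy
  apply hred
  apply Polynomial.irreducible_comp hmonic (monic_X_pow p) hirr
  intro E _ _ x hx
  have hxint : IsIntegral K x := by
    by_contra h
    exact hirr.ne_zero (hx.symm.trans (minpoly.eq_zero h))
  simp only [Polynomial.map_pow, map_X]
  rw [show (X : K⟮x⟯[X]) ^ p - C (AdjoinSimple.gen K x)
      = X ^ p - C (AdjoinSimple.gen K x) from rfl]
  apply X_pow_sub_C_irreducible_of_prime hp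
  intro b hb
  apply hy ((-1) ^ f.natDegree * Algebra.norm K b)
  have hnorm : Algebra.norm K (AdjoinSimple.gen K x)
      = (-1) ^ f.natDegree * f.eval 0 := by
    rw [← adjoin.powerBasis_gen hxint,
      Algebra.PowerBasis.norm_gen_eq_coeff_zero_minpoly]
    simp [adjoin.powerBasis_gen, minpoly_gen, hx, coeff_zero_eq_eval_zero]
  have key : (Algebra.norm K b) ^ p = (-1) ^ f.natDegree * f.eval 0 := by
    rw [← hnorm, ← hb, map_pow]
  have hsign : ((-1 : K) ^ f.natDegree) ^ p = (-1) ^ f.natDegree := by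
    rcases hn with h | h
    · rw [h.neg_one_pow, one_pow]
    · rw [← pow_mul, mul_comm, pow_mul, h.neg_one_pow]
  rw [mul_pow, hsign, key, ← mul_assoc, ← mul_pow]
  simp

theorem auxMain {K : Type u} [Field K] (w : K[X]) (hmonic : w.Monic)
    (hirr : Irreducible w) (c : K) :
    ∀ d : ℕ, 1 ≤ d → (Even d → Even w.natDegree) →
      ¬Irreducible (w.comp ((X : K[X]) ^ d + C c)) →
      ∃ (y : K) (p : ℕ), p.Prime ∧ p ∣ d ∧ w.eval c = y ^ p := by
  intro d
  induction d using Nat.strong_induction_on with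
  | _ d IH =>
    intro hd1 hdeg hred
    rcases eq_or_lt_of_le hd1 with h1 | h2
    · -- d = 1 : w.comp (X + C c) is irreducible, contradiction
      exfalso
      apply hred
      rw [← h1, pow_one]
      have : w.comp (X + C c) = (algEquivAevalXAddC c : K[X] ≃ₐ[K] K[X]) w := by
        simp [algEquivAevalXAddC, aeval_def, eval₂_eq_eval_map, comp]
      rw [this]
      exact (MulEquiv.irreducible_iff
        (algEquivAevalXAddC c : K[X] ≃ₐ[K] K[X])).mpr hirr
    · -- d ≥ 2
      obtain ⟨p, hp, hpd⟩ : ∃ p, p.Prime ∧ p ∣ d :=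
        ⟨d.minFac, Nat.minFac_prime (by omega), Nat.minFac_dvd d⟩
      obtain ⟨m, hdm⟩ := hpd
      have hpd : p ∣ d := ⟨m, hdm⟩
      have hm1 : 1 ≤ m :=
        Nat.pos_of_ne_zero (fun h => by rw [h, mul_zero] at hdm; omega)
      have hmlt : m < d := by
        have := hp.two_le
        nlinarith
      by_cases hf : Irreducible (w.comp ((X : K[X]) ^ m + C c))
      · -- apply auxA to f := w.comp (X^m + C c)
        have hfm : (w.comp ((X : K[X]) ^ m + C c)).Monic := by
          apply hmonic.comp
          · apply monic_X_pow_add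
            exact degree_C_le.trans_lt (by exact_mod_cast hm1)
          · rw [natDegree_X_pow_add_C]
            omega
        have hcomp : (w.comp ((X : K[X]) ^ m + C c)).comp ((X : K[X]) ^ p)
            = w.comp ((X : K[X]) ^ d + C c) := by
          rw [comp_assoc]
          congr 1
          simp [add_comp, pow_comp, X_comp, C_comp, hdm, ← pow_mul]
        have hnm : Even (w.comp ((X : K[X]) ^ m + C c)).natDegree ∨ Odd p := by
          rcases Nat.Prime.eq_two_or_odd' hp with h2 | hodd
          · left
            subst h2
            rw [natDegree_comp, natDegree_X_pow_add_C]
            have hde : Even d := ⟨m, by omega⟩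
            exact (hdeg hde).mul_right m
          · right; exact hodd
        obtain ⟨y, hy⟩ := auxA hfm hf hp hnm (by rw [hcomp]; exact hred)
        refine ⟨y, p, hp, hpd, ?_⟩
        rw [← hy, eval_comp]
        simp [zero_pow (by omega : m ≠ 0)]
      · -- recurse on m
        have hdegm : Even m → Even w.natDegree := fun hme ↦ by
          apply hdeg
          rw [hdm]; exact hme.mul_left p
        obtain ⟨y, q, hq, hqm, hy⟩ := IH m hmlt hm1 hdegm hf
        exact ⟨y, q, hq, hqm.trans ⟨p, by rw [hdm, mul_comm]⟩, hy⟩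

theorem stmt12 (K : Type*) [Field K] [CharZero K] (w : K[X])
    (hmonic : w.Monic) (hirr : Irreducible w) (c : K) (d : ℕ) (hd : 2 ≤ d)
    (hdeg : Even d → Even w.natDegree)
    (hred : ¬Irreducible (w.comp ((X : K[X]) ^ d + C c))) :
    ∃ (y : K) (p : ℕ), p.Prime ∧ p ∣ d ∧
      w.eval ((0 : K) ^ d + c) = y ^ p := by
  obtain ⟨y, p, hp, hpd, hy⟩ := auxMain w hmonic hirr c d (by omega) hdeg hred
  refine ⟨y, p, hp, hpd, ?_⟩
  rw [zero_pow (by omega : d ≠ 0), zero_add, hy]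
end

section
/- Let K be a field of characteristic zero and d ≥ 2. If θ₁ ∘ ⋯ ∘ θₙ = τ₁ ∘ ⋯ ∘ τₘ where each θᵢ and τⱼ is a polynomial of the form x^d + b for some b ∈ K, then n = m and θᵢ = τᵢ for all i. In other words, the semigroup under composition generated by all polynomials x^d + c with c ∈ K is free. -/
open Polynomial

private lemma fold_monic {K : Type*} [Field K] {d : ℕ} (hd : 2 ≤ d) (l : List K) :
    ((l.map fun c => (X : K[X]) ^ d + C c).foldr (·.comp ·) X).Monic ∧
    ((l.map fun c => (X : K[X]) ^ d + C c).foldr (·.comp ·) X).natDegree = d ^ l.length := by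
  induction l with
  | nil => simpa using monic_X
  | cons c l ih =>
    obtain ⟨hm, hdeg⟩ := ih
    set Q := (l.map fun c => (X : K[X]) ^ d + C c).foldr (·.comp ·) X with hQ
    simp only [List.map_cons, List.foldr_cons, add_comp, pow_comp, X_comp, C_comp, ← hQ]
    have hQd : (Q ^ d).Monic := hm.pow d
    have hQdn : (Q ^ d).natDegree = d ^ (l.length + 1) := by
      rw [natDegree_pow, hdeg]; ring
    have hpos : 0 < (Q ^ d).natDegree := by
      rw [hQdn]; exact Nat.one_le_pow _ _ (by omega)
    have hdc : (C c).degree < (Q ^ d).degree := by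
      refine lt_of_le_of_lt degree_C_le ?_
      rw [degree_eq_natDegree hQd.ne_zero]
      exact_mod_cast hpos
    constructor
    · exact hQd.add_of_left hdc
    · rw [natDegree_add_C, hQdn, List.length_cons]

private lemma key_cancel {K : Type*} [Field K] [CharZero K] {d : ℕ} (hd : 2 ≤ d)
    {Q Q' : K[X]} (hQ : Q.Monic) (hQ' : Q'.Monic)
    (hN : 1 ≤ Q.natDegree) (hNN : Q.natDegree = Q'.natDegree)
    {c c' : K} (h : Q ^ d + C c = Q' ^ d + C c') : Q = Q' ∧ c = c' := by
  by_cases hqq : Q = Q'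
  · subst hqq
    exact ⟨rfl, C_injective (add_left_cancel h)⟩
  exfalso
  set S : K[X] := ∑ i ∈ Finset.range d, Q ^ i * Q' ^ (d - 1 - i) with hSdef
  have hS : S * (Q - Q') = Q ^ d - Q' ^ d := geom_sum₂_mul Q Q' d
  have hcoeff : S.coeff (Q.natDegree * (d - 1)) = (d : K) := by
    rw [hSdef, finset_sum_coeff]
    have : ∀ i ∈ Finset.range d, (Q ^ i * Q' ^ (d - 1 - i)).coeff (Q.natDegree * (d - 1)) = 1 := by
      intro i hi
      have hi' : i ≤ d - 1 := by
        have := Finset.mem_range.mp hi; omega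
      have hmon : (Q ^ i * Q' ^ (d - 1 - i)).Monic := (hQ.pow i).mul (hQ'.pow _)
      have hdeg : (Q ^ i * Q' ^ (d - 1 - i)).natDegree = Q.natDegree * (d - 1) := by
        rw [natDegree_mul (hQ.pow i).ne_zero (hQ'.pow _).ne_zero,
          natDegree_pow, natDegree_pow, ← hNN]
        have h5 : i + (d - 1 - i) = d - 1 := by omega
        calc i * Q.natDegree + (d - 1 - i) * Q.natDegree
            = (i + (d - 1 - i)) * Q.natDegree := by ring
        _ = Q.natDegree * (d - 1) := by rw [h5]; ring
      rw [← hdeg]; exact hmon.coeff_natDegree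
    rw [Finset.sum_congr rfl this]
    simp
  have hdK : (d : K) ≠ 0 := Nat.cast_ne_zero.mpr (by omega)
  have hSne : S ≠ 0 := fun h0 => hdK (by rw [← hcoeff, h0, coeff_zero])
  have hSdeg : Q.natDegree * (d - 1) ≤ S.natDegree :=
    le_natDegree_of_ne_zero (hcoeff ▸ hdK)
  have hsub : Q - Q' ≠ 0 := sub_ne_zero.mpr hqq
  have hconst : S * (Q - Q') = C (c' - c) := by
    rw [hS, C_sub]
    linear_combination h
  have : S.natDegree + (Q - Q').natDegree = (C (c' - c)).natDegree := by
    rw [← natDegree_mul hSne hsub, hconst]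
  rw [natDegree_C] at this
  have h6 : S.natDegree = 0 := by omega
  have h7 : Q.natDegree * (d - 1) = 0 := by omega
  rcases Nat.mul_eq_zero.mp h7 with h1 | h1 <;> omega

private lemma fold_free {K : Type*} [Field K] [CharZero K] {d : ℕ} (hd : 2 ≤ d) :
    ∀ l₁ l₂ : List K,
    (l₁.map fun c => (X : K[X]) ^ d + C c).foldr (·.comp ·) X =
    (l₂.map fun c => (X : K[X]) ^ d + C c).foldr (·.comp ·) X → l₁ = l₂ := by
  intro l₁
  induction l₁ with
  | nil =>
    intro l₂ h
    cases l₂ with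
    | nil => rfl
    | cons c l =>
      exfalso
      have h1 := (fold_monic (K := K) hd ([] : List K)).2
      have h2 := (fold_monic (K := K) hd (c :: l)).2
      rw [h] at h1
      rw [h1] at h2
      have := Nat.pow_right_injective hd h2
      simp at this
  | cons c l₁ ih =>
    intro l₂ h
    cases l₂ with
    | nil =>
      exfalso
      have h1 := (fold_monic (K := K) hd (c :: l₁)).2
      have h2 := (fold_monic (K := K) hd ([] : List K)).2
      rw [← h] at h2
      rw [h2] at h1
      have := Nat.pow_right_injective hd h1
      simp at this
    | cons c' l₂ =>
      obtain ⟨hm1, hd1⟩ := fold_monic (K := K) hd l₁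
      obtain ⟨hm2, hd2⟩ := fold_monic (K := K) hd l₂
      set Q := (l₁.map fun c => (X : K[X]) ^ d + C c).foldr (·.comp ·) X with hQ
      set Q' := (l₂.map fun c => (X : K[X]) ^ d + C c).foldr (·.comp ·) X with hQ'
      simp only [List.map_cons, List.foldr_cons, add_comp, pow_comp, X_comp, C_comp,
        ← hQ, ← hQ'] at h
      have hlen : l₁.length = l₂.length := by
        have h1 := (fold_monic (K := K) hd (c :: l₁)).2
        have h2 := (fold_monic (K := K) hd (c' :: l₂)).2
        rw [show ((c :: l₁).map fun c => (X : K[X]) ^ d + C c).foldr (·.comp ·) X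
            = Q ^ d + C c by
          simp only [List.map_cons, List.foldr_cons, add_comp, pow_comp, X_comp, C_comp, ← hQ],
          h, show Q' ^ d + C c' = ((c' :: l₂).map fun c => (X : K[X]) ^ d + C c).foldr (·.comp ·) X by
          simp only [List.map_cons, List.foldr_cons, add_comp, pow_comp, X_comp, C_comp, ← hQ'],
          h2] at h1
        have h3 := Nat.pow_right_injective hd h1
        simpa using h3.symm
      have hNN : Q.natDegree = Q'.natDegree := by
        rw [hd1, hd2, hlen]
      have hN1 : 1 ≤ Q.natDegree := by
        rw [hd1]; exact Nat.one_le_pow _ _ (by omega)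
      obtain ⟨hQQ, hcc⟩ := key_cancel hd hm1 hm2 hN1 hNN h
      rw [hcc, ih l₂ hQQ]

theorem stmt14 (K : Type*) [Field K] [CharZero K] (d : ℕ) (hd : 2 ≤ d)
    (n m : ℕ) (b : Fin n → K) (b' : Fin m → K)
    (h : (List.ofFn fun i => (X : K[X]) ^ d + C (b i)).foldr (·.comp ·) X =
         (List.ofFn fun j => (X : K[X]) ^ d + C (b' j)).foldr (·.comp ·) X) :
    n = m ∧ ∀ (i : Fin n) (j : Fin m), (i : ℕ) = (j : ℕ) → b i = b' j := by
  have h' : ((List.ofFn b).map fun c => (X : K[X]) ^ d + C c).foldr (·.comp ·) X =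
      ((List.ofFn b').map fun c => (X : K[X]) ^ d + C c).foldr (·.comp ·) X := by
    rw [List.map_ofFn, List.map_ofFn]; exact h
  have heq := fold_free hd _ _ h'
  have hnm : n = m := by
    have := congrArg List.length heq
    simpa using this
  subst hnm
  refine ⟨rfl, ?_⟩
  intro i j hij
  have hb : b = b' := List.ofFn_injective heq
  rw [hb]
  congr 1
  exact Fin.ext hij
end

section
/- Let f(x) = x^2 − 2. If f^4(α) = ε·y^2 for some integers α, y and ε = ±1, then α = ±1 and ε·y^2 = −1. -/
lemma key16 (x y ε : ℤ) (hε : ε = 1 ∨ ε = -1) (h : x ^ 2 - 2 = ε * y ^ 2) :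
    (x = 1 ∨ x = -1) ∧ ε * y ^ 2 = -1 := by
  rcases hε with rfl | rfl
  · exfalso
    have h4 : ((x : ZMod 4) ^ 2 - 2 = (y : ZMod 4) ^ 2) := by
      have := congrArg (fun n : ℤ => (n : ZMod 4)) h
      push_cast at this
      simpa using this
    revert h4
    generalize (x : ZMod 4) = a
    generalize (y : ZMod 4) = b
    revert a b
    decide
  · have hx2 : x ^ 2 + y ^ 2 = 2 := by linarith
    have hl : -1 ≤ x := by nlinarith [sq_nonneg y]
    have hr : x ≤ 1 := by nlinarith [sq_nonneg y]
    interval_cases x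
    · exact ⟨Or.inr rfl, by nlinarith⟩
    · exfalso
      have hyl : -1 ≤ y := by nlinarith
      have hyr : y ≤ 1 := by nlinarith
      interval_cases y <;> omega
    · exact ⟨Or.inl rfl, by nlinarith⟩

lemma step16 (x : ℤ) (h : x ^ 2 - 2 = 1 ∨ x ^ 2 - 2 = -1) : x = 1 ∨ x = -1 := by
  rcases h with h | h
  · have := (key16 x 1 1 (Or.inl rfl) (by linarith)).2
    norm_num at this
  · exact (key16 x 1 (-1) (Or.inr rfl) (by linarith)).1

theorem stmt16 (α y ε : ℤ) (hε : ε = 1 ∨ ε = -1)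
    (h : (fun x : ℤ => x ^ 2 - 2)^[4] α = ε * y ^ 2) :
    (α = 1 ∨ α = -1) ∧ ε * y ^ 2 = -1 := by
  simp [Function.iterate_succ_apply'] at h
  have k4 := key16 _ _ _ hε h
  have k3 := step16 ((α^2-2)^2-2) (by rcases k4.1 with h'|h' <;> [left; right] <;> linarith)
  have k2 := step16 (α^2-2) (by rcases k3 with h'|h' <;> [left; right] <;> nlinarith)
  have k1 := step16 α (by rcases k2 with h'|h' <;> [left; right] <;> nlinarith)
  exact ⟨k1, k4.2⟩
end

section
/- Let f(x) = x^2 − 460. Then f^3(22) = 114^2, and 22 is not a preperiodic point of f. (Thus the iterate bound n ≥ 4 in the p-th power classification theorem for d = 2 cannot be lowered to 3.) -/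
theorem stmt17 :
    (fun x : ℤ => x ^ 2 - 460)^[3] 22 = 114 ^ 2 ∧
    ¬(Set.range fun n : ℕ => (fun x : ℤ => x ^ 2 - 460)^[n] 22).Finite := by
  constructor
  · norm_num [Function.iterate_succ_apply']
  · have key : ∀ n : ℕ, 22 ≤ (fun x : ℤ => x ^ 2 - 460)^[n] 22 := by
      intro n
      induction n with
      | zero => simp
      | succ k ih =>
        rw [Function.iterate_succ_apply']
        nlinarith
    have hmono : StrictMono fun n : ℕ => (fun x : ℤ => x ^ 2 - 460)^[n] 22 := by
      apply strictMono_nat_of_lt_succ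
      intro n
      have := key n
      rw [Function.iterate_succ_apply']
      nlinarith
    exact Set.infinite_range_of_injective hmono.injective
end

section
/- Let f(x) = x^d + 1 with d ≥ 3. Then there are no integers α, y, no prime p dividing d, and no ε = ±1 such that f^3(α) = ε·y^p. -/
lemma aux_pow (a : ℤ) (ha : 1 ≤ a) (n : ℕ) : a ^ n + n ≤ (a + 1) ^ n := by
  induction n with
  | zero => simp
  | succ n ih =>
    have h1 : (1:ℤ) ≤ a ^ n := one_le_pow₀ ha
    have h3 : (a ^ n + n) * (a + 1) ≤ (a + 1) ^ n * (a + 1) :=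
      mul_le_mul_of_nonneg_right ih (by linarith)
    have h2 : (a + 1) ^ (n + 1) = (a + 1) ^ n * (a + 1) := pow_succ _ _
    have h4 : a ^ (n + 1) = a ^ n * a := pow_succ _ _
    push_cast
    nlinarith [h1, h3]

lemma abs_pow_ne_two (t : ℤ) (d : ℕ) (hd : 2 ≤ d) : |t ^ d| ≠ 2 := by
  rw [abs_pow]
  rcases le_or_gt |t| 1 with h | h
  · have : |t| ^ d ≤ 1 ^ d := pow_le_pow_left₀ (abs_nonneg t) h d
    simp at this; omega
  · have h2 : (2:ℤ) ≤ |t| := h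
    have : (2:ℤ) ^ d ≤ |t| ^ d := pow_le_pow_left₀ (by norm_num) h2 d
    have : (2:ℤ) ^ 2 ≤ 2 ^ d := pow_le_pow_right₀ (by norm_num) hd
    omega

lemma key_s19 (p : ℕ) (hp : p.Prime) (a y ε : ℤ) (hε : ε = 1 ∨ ε = -1)
    (h : a ^ p + 1 = ε * y ^ p) : a = 0 ∨ a = -1 := by
  rcases hp.eq_two_or_odd' with rfl | hodd
  · rcases hε with rfl | rfl
    · -- a^2 + 1 = y^2
      have hfac : (y - a) * (y + a) = 1 := by ring_nf; nlinarith [h]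
      rcases Int.mul_eq_one_iff_eq_one_or_neg_one.mp hfac with ⟨h1, h2⟩ | ⟨h1, h2⟩ <;>
        [left; left] <;> linarith
    · nlinarith [sq_nonneg a, sq_nonneg y, h]
  · -- p odd; get z with a^p + 1 = z^p
    obtain ⟨z, hz⟩ : ∃ z : ℤ, a ^ p + 1 = z ^ p := by
      rcases hε with rfl | rfl
      · exact ⟨y, by linarith⟩
      · exact ⟨-y, by rw [hodd.neg_pow]; linarith⟩
    by_contra hcon
    push_neg at hcon
    have hmono := hodd.strictMono_pow (R := ℤ)
    have hza : a < z := by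
      have : a ^ p < z ^ p := by omega
      exact hmono.lt_iff_lt.mp this
    have hz1 : a + 1 ≤ z := hza
    have hle : (a + 1) ^ p ≤ z ^ p := hmono.le_iff_le.mpr hz1
    have hp3 : 3 ≤ p := by
      rcases hp.two_le.lt_or_eq with h' | h'
      · omega
      · exfalso; rw [← h'] at hodd; exact (Nat.not_odd_iff_even.mpr (by decide)) hodd
    rcases (by omega : 1 ≤ a ∨ a ≤ -2) with ha | ha
    · have := aux_pow a ha p
      have hpc : (3:ℤ) ≤ (p:ℤ) := by exact_mod_cast hp3
      omega
    · set c : ℤ := -a - 1 with hc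
      have hc1 : 1 ≤ c := by omega
      have e1 : (a + 1) ^ p = -(c ^ p) := by
        have : a + 1 = -c := by omega
        rw [this, hodd.neg_pow]
      have e2 : a ^ p = -((c + 1) ^ p) := by
        have : a = -(c + 1) := by omega
        rw [this, hodd.neg_pow]
      have := aux_pow c hc1 p
      have hpc : (3:ℤ) ≤ (p:ℤ) := by exact_mod_cast hp3
      omega

theorem stmt19 (d : ℕ) (hd : 3 ≤ d) :
    ¬∃ (α y ε : ℤ) (p : ℕ), p.Prime ∧ p ∣ d ∧ (ε = 1 ∨ ε = -1) ∧
      (fun x : ℤ => x ^ d + 1)^[3] α = ε * y ^ p := by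
  rintro ⟨α, y, ε, p, hp, hpd, hε, heq⟩
  simp only [Function.iterate_succ, Function.iterate_zero, Function.comp_apply, id_eq] at heq
  set N : ℤ := (α ^ d + 1) ^ d + 1 with hN
  obtain ⟨m, hm⟩ := hpd
  have hm0 : m ≠ 0 := by rintro rfl; omega
  have hNd : N ^ d = (N ^ m) ^ p := by rw [hm, mul_comm, pow_mul]
  have heq' : (N ^ m) ^ p + 1 = ε * y ^ p := by rw [← hNd]; exact heq
  have habs2 : |(α ^ d + 1) ^ d| ≠ 2 := abs_pow_ne_two _ d (by omega)
  have hNval : N = -1 := by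
    rcases key_s19 p hp (N ^ m) y ε hε heq' with h0 | h1
    · -- N^m = 0 → N = 0 → (α^d+1)^d = -1 → |α^d+1| = 1 → contradiction
      have hN0 : N = 0 := by
        have := pow_eq_zero_iff hm0 |>.mp h0
        exact this
      exfalso
      have ht : (α ^ d + 1) ^ d = -1 := by omega
      set t : ℤ := α ^ d + 1 with htd
      have habs : |t| ^ d = 1 := by
        rw [← abs_pow, ht]; norm_num
      have ht1 : |t| = 1 := by
        rcases (by have := abs_nonneg t; omega : |t| = 0 ∨ |t| = 1 ∨ 2 ≤ |t|) with h' | h' | h'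
        · rw [h', zero_pow (by omega)] at habs; omega
        · exact h'
        · have : (2:ℤ) ^ d ≤ |t| ^ d := pow_le_pow_left₀ (by norm_num) h' d
          have : (2:ℤ) ^ 3 ≤ 2 ^ d := pow_le_pow_right₀ (by norm_num) hd
          omega
      rcases abs_eq (by norm_num : (0:ℤ) ≤ 1) |>.mp ht1 with h' | h'
      · rw [h'] at ht; simp at ht
      · -- t = -1 so α^d = -2
        have hα : α ^ d = -2 := by omega
        have : |α ^ d| ≠ 2 := abs_pow_ne_two α d (by omega)
        rw [hα] at this; norm_num at this
    · -- N^m = -1 → N = -1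
      have habs : |N| ^ m = 1 := by rw [← abs_pow, h1]; norm_num
      have hN1 : |N| = 1 := by
        rcases (by have := abs_nonneg N; omega : |N| = 0 ∨ |N| = 1 ∨ 2 ≤ |N|) with h' | h' | h'
        · rw [h', zero_pow hm0] at habs; omega
        · exact h'
        · have h2 : (2:ℤ) ^ m ≤ |N| ^ m := pow_le_pow_left₀ (by norm_num) h' m
          have h3 : (2:ℤ) ^ 1 ≤ 2 ^ m := pow_le_pow_right₀ (by norm_num) (by omega)
          omega
      rcases abs_eq (by norm_num : (0:ℤ) ≤ 1) |>.mp hN1 with h' | h'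
      · rw [h'] at h1; simp at h1
      · exact h'
  -- N = -1 → (α^d+1)^d = -2, contradiction
  have : (α ^ d + 1) ^ d = -2 := by omega
  rw [this] at habs2; norm_num at habs2
end
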